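/- arXiv:1102.0167 — 5 statements merged into one kernel-verified Lean document; each statement's English description precedes it below -/
import Mathlib

section
/- Let 1 < p < ∞ with Hölder conjugate q, and let A : V → V satisfy the homogeneity, Lipschitz and monotonicity conditions of a p-structure with constants C_𝔄, c_𝔄 (so A(λv) = λ^{p−1}A(v) for λ ≥ 0, |A(v₁)−A(v₂)| ≤ C_𝔄(|v₁|+|v₂|)^{p−2}|v₁−v₂| and ⟨A(v₁)−A(v₂) | v₁−v₂⟩ ≥ c_𝔄(|v₁|+|v₂|)^{p−2}|v₁−v₂|²). Let A₁, A₂ ∈ V and set B₁ := A(A₁), B₂ := A(A₂). Then there is a constant C' depending only on p, C_𝔄, c_𝔄 such that |A₁ − A₂|^p + |B₁ − B₂|^q ≤ C' (⟨A₁ − A₂ | B₁ − B₂⟩ + |A₁|^p + |B₁|^q) and also |A₁ − A₂|^p + |B₁ − B₂|^q ≤ C' (⟨A₁ − A₂ | B₁ − B₂⟩ + |A₂|^p + |B₂|^q). -/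
open scoped RealInnerProductSpace

/-- A map `A : V → V` satisfies the homogeneity, Lipschitz and monotonicity conditions of a
`p`-structure with constants `CA, cA > 0`.  Real exponents are interpreted via `Real.rpow`,
so that for `p < 2` the expressions `(|v₁|+|v₂|)^{p−2}|v₁−v₂|` and
`(|v₁|+|v₂|)^{p−2}|v₁−v₂|²` are `0` when `v₁ = v₂ = 0`. -/
structure IsPStructureMap {V : Type*} [NormedAddCommGroup V] [InnerProductSpace ℝ V]
    (p : ℝ) (A : V → V) (CA cA : ℝ) : Prop where
  homog : ∀ l : ℝ, 0 ≤ l → ∀ v : V, A (l • v) = l ^ (p - 1) • A v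
  lipschitz : ∀ v₁ v₂ : V,
    ‖A v₁ - A v₂‖ ≤ CA * ((‖v₁‖ + ‖v₂‖) ^ (p - 2) * ‖v₁ - v₂‖)
  monotone : ∀ v₁ v₂ : V,
    cA * ((‖v₁‖ + ‖v₂‖) ^ (p - 2) * ‖v₁ - v₂‖ ^ (2 : ℝ)) ≤ ⟪A v₁ - A v₂, v₁ - v₂⟫

set_option maxHeartbeats 2000000 in
/-- Let `1 < p < ∞` with Hölder conjugate `q`, and let `A : V → V` satisfy
the conditions of a `p`-structure with constants `CA, cA`.  For `A₁, A₂ ∈ V` put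
`B₁ := A A₁`, `B₂ := A A₂`.  Then there is a constant `C'` depending only on `p, CA, cA`
such that
`|A₁−A₂|^p + |B₁−B₂|^q ≤ C'(⟨A₁−A₂ | B₁−B₂⟩ + |A₁|^p + |B₁|^q)` and also
`|A₁−A₂|^p + |B₁−B₂|^q ≤ C'(⟨A₁−A₂ | B₁−B₂⟩ + |A₂|^p + |B₂|^q)`. -/
theorem p_structure_pointwise_inequalities
    {V : Type*} [NormedAddCommGroup V] [InnerProductSpace ℝ V] [FiniteDimensional ℝ V]
    (p q : ℝ) (hp : 1 < p) (hpq : 1 / p + 1 / q = 1)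
    (CA cA : ℝ) (hCA : 0 < CA) (hcA : 0 < cA) :
    ∃ C' : ℝ, ∀ A : V → V, IsPStructureMap p A CA cA → ∀ A₁ A₂ : V,
      ‖A₁ - A₂‖ ^ p + ‖A A₁ - A A₂‖ ^ q ≤
        C' * (⟪A₁ - A₂, A A₁ - A A₂⟫ + ‖A₁‖ ^ p + ‖A A₁‖ ^ q) ∧
      ‖A₁ - A₂‖ ^ p + ‖A A₁ - A A₂‖ ^ q ≤
        C' * (⟪A₁ - A₂, A A₁ - A A₂⟫ + ‖A₂‖ ^ p + ‖A A₂‖ ^ q) := by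
  have hp0 : (0:ℝ) < p := by linarith
  have h1p : 1/p < 1 := by rw [div_lt_one hp0]; exact hp
  have h1pp : 0 < 1/p := by positivity
  have hq0 : (0:ℝ) < q := by
    have h : 0 < 1/q := by linarith
    exact one_div_pos.mp h
  have hpq2 : q + p = p * q := by
    field_simp at hpq; linarith
  have hpq' : (p-1)*q = p := by nlinarith
  have hCAq : (0:ℝ) < CA ^ q := Real.rpow_pos_of_pos hCA q
  have h2p : (0:ℝ) < (2:ℝ) ^ p := Real.rpow_pos_of_pos (by norm_num) p
  have h4p : (0:ℝ) < (4:ℝ) ^ p := Real.rpow_pos_of_pos (by norm_num) p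
  have h12p : (1:ℝ) ≤ (2:ℝ) ^ p := by
    calc (1:ℝ) = (2:ℝ) ^ (0:ℝ) := by rw [Real.rpow_zero]
    _ ≤ (2:ℝ)^p := Real.rpow_le_rpow_of_exponent_le one_le_two hp0.le
  set C' : ℝ := ((1 + CA^q * 2^p) * (4^p * cA + 4) + CA^q * 4^p * cA)/cA with hC'def
  have hC'0 : 0 < C' := by
    apply div_pos _ hcA
    nlinarith [mul_pos (show (0:ℝ) < 1 + CA^q*2^p by nlinarith)
      (show (0:ℝ) < 4^p*cA+4 by nlinarith), mul_pos (mul_pos hCAq h4p) hcA]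
  refine ⟨C', fun A hA A₁ A₂ => ?_⟩
  have addpow : ∀ x y : ℝ, 0 ≤ x → 0 ≤ y → (x+y)^p ≤ 2^p * (x^p + y^p) := by
    intro x y hx hy
    have hm : x + y ≤ 2 * max x y := by
      rcases le_total x y with h|h
      · rw [max_eq_right h]; linarith
      · rw [max_eq_left h]; linarith
    have h0m : 0 ≤ max x y := le_max_of_le_left hx
    calc (x+y)^p ≤ (2*max x y)^p := Real.rpow_le_rpow (by linarith) hm hp0.le
    _ = 2^p * (max x y)^p := Real.mul_rpow (by norm_num) h0m
    _ ≤ 2^p * (x^p + y^p) := by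
        apply mul_le_mul_of_nonneg_left _ h2p.le
        rcases le_total x y with h|h
        · rw [max_eq_right h]; nlinarith [Real.rpow_nonneg hx p]
        · rw [max_eq_left h]; nlinarith [Real.rpow_nonneg hy p]
  have key : ∀ u v : V, ‖u - v‖ ^ p + ‖A u - A v‖ ^ q ≤
      C' * (⟪u - v, A u - A v⟫ + ‖u‖ ^ p + ‖A u‖ ^ q) := by
    intro u v
    by_cases huv : u = v
    · subst huv
      simp only [sub_self, norm_zero, inner_zero_left, zero_add]
      rw [Real.zero_rpow hp0.ne', Real.zero_rpow hq0.ne']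
      have h1 : 0 ≤ ‖u‖^p := Real.rpow_nonneg (norm_nonneg u) p
      have h2 : 0 ≤ ‖A u‖^q := Real.rpow_nonneg (norm_nonneg _) q
      nlinarith
    · have hd : 0 < ‖u - v‖ := norm_pos_iff.mpr (sub_ne_zero.mpr huv)
      have hvub : ‖v‖ ≤ ‖u‖ + ‖u - v‖ := by
        have h := norm_sub_le u (u - v)
        simpa using h
      set d := ‖u - v‖ with hddef
      set D := ‖u‖ + ‖v‖ with hDdef
      have hdD : d ≤ D := norm_sub_le u v
      have hD : 0 < D := lt_of_lt_of_le hd hdD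
      set S := D ^ (p-2) * d ^ (2:ℝ) with hSdef
      have hS0 : 0 ≤ S :=
        mul_nonneg (Real.rpow_nonneg hD.le _) (Real.rpow_nonneg hd.le _)
      have HS : cA * S ≤ ⟪u - v, A u - A v⟫ := by
        rw [real_inner_comm]; exact hA.monotone u v
      have hI0 : 0 ≤ ⟪u - v, A u - A v⟫ := le_trans (by nlinarith) HS
      have ha0 : 0 ≤ ‖u‖^p := Real.rpow_nonneg (norm_nonneg u) p
      have ht0 : 0 ≤ ‖A u‖^q := Real.rpow_nonneg (norm_nonneg _) q
      have hd2 : d ^ (2:ℝ) = d^2 := by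
        rw [show (2:ℝ) = ((2:ℕ):ℝ) by norm_num, Real.rpow_natCast]
      have hDD2 : D ≤ 2*‖u‖ + d := by rw [hDdef]; linarith
      -- Step A : d^p ≤ 4^p ‖u‖^p + 4 S
      have HA : d ^ p ≤ 4^p * ‖u‖^p + 4 * S := by
        rcases le_or_gt d (4*‖u‖) with h|h
        · have h1 : d^p ≤ (4*‖u‖)^p := Real.rpow_le_rpow hd.le h hp0.le
          rw [Real.mul_rpow (by norm_num) (norm_nonneg u)] at h1
          nlinarith
        · have hDd : D ≤ 2*d := by linarith
          have h1 : d^p ≤ D^p := Real.rpow_le_rpow hd.le hdD hp0.le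
          have h2 : D^p = D^(p-2) * D^(2:ℝ) := by
            rw [← Real.rpow_add hD]; ring_nf
          have hD2' : D ^ (2:ℝ) = D^2 := by
            rw [show (2:ℝ) = ((2:ℕ):ℝ) by norm_num, Real.rpow_natCast]
          have h3 : D^(2:ℝ) ≤ 4 * d^(2:ℝ) := by
            rw [hD2', hd2]; nlinarith
          have h4 : D^(p-2) * D^(2:ℝ) ≤ D^(p-2) * (4 * d^(2:ℝ)) :=
            mul_le_mul_of_nonneg_left h3 (Real.rpow_nonneg hD.le _)
          have h5 : d^p ≤ 4 * S := by
            rw [hSdef]; nlinarith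
          nlinarith [mul_nonneg h4p.le ha0]
      -- Step B : ‖A u - A v‖^q ≤ CA^q * (4^p ‖u‖^p + 2^p d^p)
      have hb : ‖A u - A v‖ ≤ CA * (D^(p-2) * d) := hA.lipschitz u v
      have hX0 : 0 ≤ D^(p-2) * d := mul_nonneg (Real.rpow_nonneg hD.le _) hd.le
      have HB0 : ‖A u - A v‖^q ≤ CA^q * (D^(p-2)*d)^q := by
        calc ‖A u - A v‖^q ≤ (CA * (D^(p-2)*d))^q :=
              Real.rpow_le_rpow (norm_nonneg _) hb hq0.le
        _ = CA^q * (D^(p-2)*d)^q := Real.mul_rpow hCA.le hX0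
      have hdp0 : 0 ≤ d^p := Real.rpow_nonneg hd.le p
      have HB1 : (D^(p-2)*d)^q ≤ 4^p*‖u‖^p + 2^p * d^p := by
        rcases le_or_gt p 2 with h|h
        · have hDd2 : D^(p-2) ≤ d^(p-2) :=
            Real.rpow_le_rpow_of_nonpos hd hdD (by linarith)
          have he : d^(p-1) = d^(p-2)*d := by
            rw [show p-1 = p-2+1 by ring, Real.rpow_add_one hd.ne']
          have h1 : D^(p-2)*d ≤ d^(p-1) := by
            rw [he]; nlinarith
          have h2 : (D^(p-2)*d)^q ≤ (d^(p-1))^q :=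
            Real.rpow_le_rpow hX0 h1 hq0.le
          have h3 : (d^(p-1))^q = d^p := by
            rw [← Real.rpow_mul hd.le, hpq']
          rw [h3] at h2
          nlinarith [mul_nonneg h4p.le ha0, mul_nonneg (sub_nonneg.mpr h12p) hdp0]
        · have he : D^(p-1) = D^(p-2)*D := by
            rw [show p-1 = p-2+1 by ring, Real.rpow_add_one hD.ne']
          have h1 : D^(p-2)*d ≤ D^(p-1) := by
            rw [he]
            exact mul_le_mul_of_nonneg_left hdD (Real.rpow_nonneg hD.le _)
          have h2 : (D^(p-2)*d)^q ≤ (D^(p-1))^q :=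
            Real.rpow_le_rpow hX0 h1 hq0.le
          have h3 : (D^(p-1))^q = D^p := by
            rw [← Real.rpow_mul hD.le, hpq']
          rw [h3] at h2
          have h4 : D^p ≤ (2*‖u‖ + d)^p := Real.rpow_le_rpow hD.le hDD2 hp0.le
          have h5 : (2*‖u‖ + d)^p ≤ 2^p * ((2*‖u‖)^p + d^p) :=
            addpow _ _ (by positivity) hd.le
          have h6 : (2*‖u‖)^p = 2^p * ‖u‖^p := Real.mul_rpow (by norm_num) (norm_nonneg u)
          have h7 : (2:ℝ)^p * 2^p = 4^p := by
            rw [← Real.mul_rpow (by norm_num) (by norm_num)]; norm_num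
          nlinarith
      have HB : ‖A u - A v‖^q ≤ CA^q * (4^p*‖u‖^p + 2^p * d^p) :=
        le_trans HB0 (mul_le_mul_of_nonneg_left HB1 hCAq.le)
      -- final combination
      rw [hC'def, div_mul_eq_mul_div, le_div_iff₀ hcA]
      nlinarith [mul_le_mul_of_nonneg_left HA
          (mul_nonneg hcA.le (by nlinarith : (0:ℝ) ≤ 1 + CA^q * 2^p)),
        mul_le_mul_of_nonneg_left HB hcA.le,
        mul_le_mul_of_nonneg_left HS (by nlinarith : (0:ℝ) ≤ 4*(1 + CA^q * 2^p)),
        mul_nonneg (mul_nonneg hCAq.le h4p.le) (mul_nonneg hcA.le hI0),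
        mul_nonneg (mul_nonneg hCAq.le h4p.le) (mul_nonneg hcA.le ht0),
        mul_nonneg (mul_nonneg hCAq.le h4p.le) (mul_nonneg hcA.le ha0),
        mul_nonneg (mul_nonneg hCAq.le h2p.le) (mul_nonneg hCAq.le (mul_nonneg h4p.le (mul_nonneg hcA.le ha0))),
        mul_nonneg (mul_nonneg hCAq.le h2p.le) (mul_nonneg hCAq.le (mul_nonneg h4p.le (mul_nonneg hcA.le hI0))),
        mul_nonneg (mul_nonneg hCAq.le h2p.le) (mul_nonneg hCAq.le (mul_nonneg h4p.le (mul_nonneg hcA.le ht0))),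
        mul_nonneg (mul_nonneg hCAq.le h2p.le) hI0,
        mul_nonneg (mul_nonneg hCAq.le h2p.le) ht0,
        mul_nonneg (mul_nonneg hCAq.le h2p.le) ha0,
        mul_nonneg hcA.le ha0, mul_nonneg hcA.le ht0, mul_nonneg hcA.le hI0]
  refine ⟨key A₁ A₂, ?_⟩
  have h := key A₂ A₁
  rw [norm_sub_rev A₂ A₁, norm_sub_rev (A A₂) (A A₁), ← neg_sub A₁ A₂,
    ← neg_sub (A A₁) (A A₂), inner_neg_neg] at h
  exact h
end

section
/- There is a constant C (independent of f and t) such that for every f = (a,b) ∈ L^*(X) × L^*(X) and every t ≥ 0: ∫_X E^t dx ≤ C (∫_X [f_t] dx + ∫_X [f_t]^{1/p} [H]^{1/q} dx + ∫_X [f_t]^{1/q} [H]^{1/p} dx), and likewise ∫_X E_t dx ≤ C (∫_X [f^t] dx + ∫_X [f^t]^{1/p} [H]^{1/q} dx + ∫_X [f^t]^{1/q} [H]^{1/p} dx). -/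
open MeasureTheory ENNReal
open scoped RealInnerProductSpace

noncomputable section

variable {X : Type*} [MeasurableSpace X] {V : Type*}
  [NormedAddCommGroup V] [InnerProductSpace ℝ V] [FiniteDimensional ℝ V]
  [MeasurableSpace V] [BorelSpace V]

/-- Membership in `L^s(X, V)` for a real exponent `s`. -/
def MemLs (μ : Measure X) (s : ℝ) (f : X → V) : Prop :=
  MemLp f (ENNReal.ofReal s) μ

/-- Membership in `L^*(X) = ⋂_{1 ≤ s ≤ ∞} L^s(X, V)`. -/
def MemLstar (μ : Measure X) (f : X → V) : Prop :=
  MemLp f ⊤ μ ∧ ∀ s : ℝ, 1 ≤ s → MemLp f (ENNReal.ofReal s) μ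

/-- The orthogonal complement in `L²(X, V)` of a set `K` of functions, at the level of
functions: all `g ∈ L²` whose inner product with every member of `K` integrates to `0`. -/
def OrthCompl (μ : Measure X) (K : Set (X → V)) : Set (X → V) :=
  {g | MemLp g 2 μ ∧ ∀ f ∈ K, ∫ x, ⟪f x, g x⟫ ∂μ = 0}

/-- `K` is (the set of representatives of) a closed linear subspace of `L²(X, V)`. -/
structure IsClosedL2Subspace (μ : Measure X) (K : Set (X → V)) : Prop where
  mem_L2 : ∀ f ∈ K, MemLp f 2 μ
  zero_mem : (0 : X → V) ∈ K
  add_mem : ∀ ⦃f⦄, f ∈ K → ∀ ⦃g⦄, g ∈ K → f + g ∈ K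
  smul_mem : ∀ (c : ℝ) ⦃f⦄, f ∈ K → c • f ∈ K
  ae_mem : ∀ ⦃f⦄, f ∈ K → ∀ ⦃g : X → V⦄, f =ᵐ[μ] g → g ∈ K
  closed : ∀ ⦃f : X → V⦄, MemLp f 2 μ →
    (∀ ε : ℝ, 0 < ε → ∃ g ∈ K, eLpNorm (f - g) 2 μ < ENNReal.ofReal ε) → f ∈ K

/-- `LsCl μ K s` is the closure of `K ∩ L^s(X,V)` in the `L^s`-norm: the space `L^s_+(X)`
(for `K = L²_+`) resp. `L^s_-(X)` (for `K = L²_-`) of the paper. -/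
def LsCl (μ : Measure X) (K : Set (X → V)) (s : ℝ) : Set (X → V) :=
  {f | MemLs μ s f ∧ ∀ ε : ℝ, 0 < ε → ∃ g ∈ K, MemLs μ s g ∧
        eLpNorm (f - g) (ENNReal.ofReal s) μ < ENNReal.ofReal ε}

/-- The orthogonal projections `Π₊` onto `K` and `Π₋ = I - Π₊` are bounded in the `L^s`-norm:
whenever `ω ∈ L² ∩ L^s` is decomposed as `ω = α + (ω - α)` with `α ∈ K` and
`ω - α ⟂ K`, both pieces obey an `L^s` bound. -/
def ProjBounded (μ : Measure X) (K : Set (X → V)) (s : ℝ) : Prop :=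
  ∃ M : ℝ, ∀ ω α : X → V, MemLp ω 2 μ → MemLs μ s ω → α ∈ K →
    (ω - α) ∈ OrthCompl μ K →
    eLpNorm α (ENNReal.ofReal s) μ ≤ ENNReal.ofReal M * eLpNorm ω (ENNReal.ofReal s) μ ∧
    eLpNorm (ω - α) (ENNReal.ofReal s) μ ≤ ENNReal.ofReal M * eLpNorm ω (ENNReal.ofReal s) μ

/-- `A : X × V → V` is a `p`-structure: Carathéodory regular, `(p−1)`-homogeneous,
Lipschitz and monotone (with the rpow convention for the degenerate case `v₁ = v₂ = 0`
when `p < 2`). -/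
structure IsPStructure (μ : Measure X) (p : ℝ) (A : X → V → V) (CA cA : ℝ) : Prop where
  measurable_x : ∀ v : V, Measurable fun x => A x v
  continuous_v : ∀ᵐ x ∂μ, Continuous fun v => A x v
  homog : ∀ᵐ x ∂μ, ∀ l : ℝ, 0 ≤ l → ∀ v : V, A x (l • v) = l ^ (p - 1) • A x v
  lipschitz : ∀ᵐ x ∂μ, ∀ v₁ v₂ : V,
    ‖A x v₁ - A x v₂‖ ≤ CA * ((‖v₁‖ + ‖v₂‖) ^ (p - 2) * ‖v₁ - v₂‖)
  monotone : ∀ᵐ x ∂μ, ∀ v₁ v₂ : V,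
    cA * ((‖v₁‖ + ‖v₂‖) ^ (p - 2) * ‖v₁ - v₂‖ ^ (2 : ℝ)) ≤ ⟪A x v₁ - A x v₂, v₁ - v₂⟫

/-- `(α, β) = ℜf` solves the `(p,q)`-system for the data `f = (a, b)`:
`α ∈ L^p_+(X)`, `β ∈ L^q_-(X)` and `𝔄(x, a+α) = b+β` a.e. -/
def Solves (μ : Measure X) (K : Set (X → V)) (A : X → V → V) (p q : ℝ)
    (a b α β : X → V) : Prop :=
  α ∈ LsCl μ K p ∧ β ∈ LsCl μ (OrthCompl μ K) q ∧
    (fun x => A x (a x + α x)) =ᵐ[μ] fun x => b x + β x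

/-- The bracket `[f] = |a|^p + |b|^q` of a pair `f = (a, b)`. -/
def br (p q : ℝ) (a b : X → V) (x : X) : ℝ :=
  ‖a x‖ ^ p + ‖b x‖ ^ q

/-- The operator `ℜ` is of weak `λ`-type: for data `f = (a,b) ∈ L^* × L^*`, the solution
`ℜf = (α,β)` lies in `L^{λp} × L^{λq}` and satisfies
`meas{x : [ℜf(x)] > t} ≤ C t^{−λ} ∫ [f]^λ` for all `t > 0`. -/
def WeakType (μ : Measure X) (K : Set (X → V)) (A : X → V → V) (p q lam : ℝ) : Prop :=
  ∃ C : ℝ, ∀ a b α β : X → V, MemLstar μ a → MemLstar μ b →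
    Solves μ K A p q a b α β →
    MemLs μ (lam * p) α ∧ MemLs μ (lam * q) β ∧
    ∀ t : ℝ, 0 < t →
      μ {x | t < br p q α β x} ≤
        ENNReal.ofReal (C * t ^ (-lam) * ∫ x, br p q a b x ^ lam ∂μ)

/-- The upper Marcinkiewicz truncation `f^t` of a function (component of a pair `f`),
relative to the level set `{[f] > t}`. -/
def upTr (p q : ℝ) (a b : X → V) (t : ℝ) (g : X → V) : X → V :=
  Set.indicator {x | t < br p q a b x} g

/-- The lower Marcinkiewicz truncation `f_t` of a function (component of a pair `f`),
relative to the level set `{[f] ≤ t}`. -/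
def loTr (p q : ℝ) (a b : X → V) (t : ℝ) (g : X → V) : X → V :=
  Set.indicator {x | br p q a b x ≤ t} g

/-! ### Auxiliary real-analysis lemmas -/

lemma rpow_mul_self' {x r : ℝ} (hx : 0 ≤ x) (hr : r + 1 ≠ 0) : x ^ r * x = x ^ (r+1) := by
  rcases eq_or_lt_of_le hx with h0 | h0
  · rw [← h0, Real.zero_rpow hr, mul_zero]
  · rw [Real.rpow_add h0, Real.rpow_one]

lemma rpow_split_one' {F c d : ℝ} (hF : 0 ≤ F) (hc : 0 < c) (hcd : c + d = 1) :
    F ^ c * F ^ d = F := by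
  rcases eq_or_lt_of_le hF with h0 | h0
  · rw [← h0, Real.zero_rpow (ne_of_gt hc), zero_mul]
  · rw [← Real.rpow_add h0, hcd, Real.rpow_one]

lemma self_eq_rpow_rpow {x p : ℝ} (hx : 0 ≤ x) (hp : 0 < p) : x = (x ^ p) ^ (1/p) := by
  rw [← Real.rpow_mul hx, show p * (1/p) = 1 from by field_simp, Real.rpow_one]

lemma mul_rpow_le_add' {F G c d : ℝ} (hF : 0 ≤ F) (hG : 0 ≤ G) (hc : 0 < c) (hd : 0 < d)
    (hcd : c + d = 1) : F ^ c * G ^ d ≤ F + G := by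
  rcases le_total F G with h | h
  · calc F ^ c * G ^ d ≤ G ^ c * G ^ d := by gcongr
      _ = G := rpow_split_one' hG hc hcd
      _ ≤ F + G := by linarith
  · calc F ^ c * G ^ d ≤ F ^ c * F ^ d := by gcongr
      _ = F := rpow_split_one' hF hc hcd
      _ ≤ F + G := by linarith

lemma energy_conj_facts {p q : ℝ} (hp2 : 2 ≤ p) (hpq : 1/p + 1/q = 1) :
    1 < q ∧ (q - 1) * (p - 1) = 1 ∧ q ≤ 2 := by
  have hp0 : (0:ℝ) < p := by linarith
  have hqne : q ≠ 0 := by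
    intro h
    rw [h] at hpq
    norm_num at hpq
    have : 1/p < 1 := by rw [div_lt_one hp0]; linarith
    linarith
  have h1 : 1/q = 1 - 1/p := by linarith
  have hppos : 0 < 1/p := by positivity
  have hplt : 1/p < 1 := by rw [div_lt_one hp0]; linarith
  have hq0 : 0 < q := by
    have : 0 < 1/q := by rw [h1]; linarith
    exact (one_div_pos).mp this
  have hq1 : 1 < q := by
    have : 1/q < 1 := by rw [h1]; linarith
    exact (div_lt_one hq0).mp this
  have hmul : q + p = p * q := by
    field_simp at hpq
    linarith
  refine ⟨hq1, by nlinarith, ?_⟩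
  have h12 : (1:ℝ)/2 ≤ 1/q := by
    rw [h1]
    have : 1/p ≤ 1/2 := by
      rw [div_le_div_iff₀ hp0 (by norm_num)]; linarith
    linarith
  nlinarith [h12, hq0]

lemma energy_claim1 {p CA cA : ℝ} (hp2 : 2 ≤ p) (hCA : 0 < CA) (hcA : 0 < cA) :
    ∃ C1 : ℝ, 0 < C1 ∧ ∀ m h D S : ℝ, 0 ≤ m → 0 ≤ h → 0 ≤ D → D ≤ S → S ≤ 2*h + D →
      CA * m * (S ^ (p-2) * D) ≤
        cA/4 * (S ^ (p-2) * D ^ (2:ℝ)) + C1 * (m * h ^ (p-1)) + C1 * m ^ p := by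
  have hp0 : (0:ℝ) < p := by linarith
  have h2p2 : (0:ℝ) < 2 ^ (p-2) := Real.rpow_pos_of_pos (by norm_num) _
  obtain ⟨θ, hθ, hθeq⟩ : ∃ θ : ℝ, 0 < θ ∧ CA * θ * 2 ^ (p-2) = cA/16 :=
    ⟨cA / (16 * CA * 2 ^ (p-2)), by positivity, by field_simp⟩
  refine ⟨2 * 4 ^ (p-2) * CA + 2 ^ (p-2) * CA * θ ^ (1-p), by positivity, ?_⟩
  intro m h D S hm hh hD hDS hS
  have hS0 : 0 ≤ S := le_trans hD hDS
  have hD2 : D ^ (2:ℝ) = D * D := by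
    rw [show (2:ℝ) = ((2:ℕ):ℝ) from by norm_num, Real.rpow_natCast, sq]
  by_cases hcase : D ≤ 2*h
  · have h4 : S ≤ 4 * h := by linarith
    have h1 : S ^ (p-2) ≤ (4*h) ^ (p-2) := Real.rpow_le_rpow hS0 h4 (by linarith)
    have h2 : (4*h) ^ (p-2) = 4 ^ (p-2) * h ^ (p-2) := Real.mul_rpow (by norm_num) hh
    have key : CA * m * (S ^ (p-2) * D) ≤ CA * m * ((4 ^ (p-2) * h ^ (p-2)) * (2*h)) := by
      rw [← h2]
      have hsub : S ^ (p-2) * D ≤ (4*h) ^ (p-2) * (2*h) :=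
        mul_le_mul h1 hcase hD (Real.rpow_nonneg (by positivity) _)
      exact mul_le_mul_of_nonneg_left hsub (by positivity)
    have heq : CA * m * ((4 ^ (p-2) * h ^ (p-2)) * (2*h)) =
        (2 * 4 ^ (p-2) * CA) * (m * (h ^ (p-2) * h)) := by ring
    rw [heq, rpow_mul_self' hh (by intro hc; linarith)] at key
    rw [show p - 2 + 1 = p - 1 from by ring] at key
    have t1 : 0 ≤ cA/4 * (S ^ (p-2) * D ^ (2:ℝ)) := by positivity
    have t2 : 0 ≤ (2 ^ (p-2) * CA * θ ^ (1-p)) * (m * h ^ (p-1)) := by positivity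
    have t3 : 0 ≤ (2 * 4 ^ (p-2) * CA + 2 ^ (p-2) * CA * θ ^ (1-p)) * m ^ p := by positivity
    nlinarith [key]
  · push_neg at hcase
    have hDpos : 0 < D := by linarith
    have hSD : S ≤ 2 * D := by linarith
    have h1 : S ^ (p-2) ≤ (2*D) ^ (p-2) := Real.rpow_le_rpow hS0 hSD (by linarith)
    have h2 : (2*D) ^ (p-2) = 2 ^ (p-2) * D ^ (p-2) := Real.mul_rpow (by norm_num) hD
    by_cases hm2 : m ≤ θ * D
    · have key : CA * m * (S ^ (p-2) * D) ≤ CA * (θ * D) * ((2 ^ (p-2) * D ^ (p-2)) * D) := by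
        rw [← h2]
        have e1 : CA * m ≤ CA * (θ * D) := by nlinarith
        have e2 : S ^ (p-2) * D ≤ (2*D) ^ (p-2) * D := mul_le_mul_of_nonneg_right h1 hD
        have e3 : 0 ≤ S ^ (p-2) * D := by positivity
        exact mul_le_mul e1 e2 e3 (by positivity)
      have hDp2S : D ^ (p-2) ≤ S ^ (p-2) := Real.rpow_le_rpow hD hDS (by linarith)
      have goalb : CA * (θ * D) * ((2 ^ (p-2) * D ^ (p-2)) * D) ≤
          cA/4 * (S ^ (p-2) * D ^ (2:ℝ)) := by
        rw [hD2]
        have e5 : CA * (θ * D) * ((2 ^ (p-2) * D ^ (p-2)) * D) =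
            (CA * θ * 2 ^ (p-2)) * (D ^ (p-2) * (D * D)) := by ring
        rw [e5, hθeq]
        have e6 : D ^ (p-2) * (D * D) ≤ S ^ (p-2) * (D * D) := by nlinarith
        have e7 : 0 ≤ D ^ (p-2) * (D * D) := by positivity
        nlinarith [e6, e7, hcA]
      have t2 : 0 ≤ (2 * 4 ^ (p-2) * CA + 2 ^ (p-2) * CA * θ ^ (1-p)) * (m * h ^ (p-1)) := by
        positivity
      have t3 : 0 ≤ (2 * 4 ^ (p-2) * CA + 2 ^ (p-2) * CA * θ ^ (1-p)) * m ^ p := by positivity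
      linarith [key, goalb, t2, t3]
    · push_neg at hm2
      have hDm : D < m / θ := by rw [lt_div_iff₀ hθ]; nlinarith
      have hDp1 : D ^ (p-1) ≤ (m/θ) ^ (p-1) := Real.rpow_le_rpow hD hDm.le (by linarith)
      have hdiv : (m/θ) ^ (p-1) = m ^ (p-1) * θ ^ (1-p) := by
        rw [Real.div_rpow hm hθ.le, div_eq_mul_inv, ← Real.rpow_neg hθ.le]
        ring_nf
      have hDD : D ^ (p-2) * D = D ^ (p-1) := by
        rw [rpow_mul_self' hD (by intro hc; linarith)]; ring_nf
      have key : CA * m * (S ^ (p-2) * D) ≤ CA * m * (2 ^ (p-2) * D ^ (p-1)) := by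
        have hsub : S ^ (p-2) * D ≤ 2 ^ (p-2) * D ^ (p-1) := by
          rw [← hDD]
          calc S ^ (p-2) * D ≤ (2 ^ (p-2) * D ^ (p-2)) * D := by
                rw [← h2]; exact mul_le_mul_of_nonneg_right h1 hD
            _ = 2 ^ (p-2) * (D ^ (p-2) * D) := by ring
        exact mul_le_mul_of_nonneg_left hsub (by positivity)
      have key2 : CA * m * (2 ^ (p-2) * D ^ (p-1)) ≤
          (2 ^ (p-2) * CA * θ ^ (1-p)) * m ^ p := by
        have hsub2 : D ^ (p-1) ≤ m ^ (p-1) * θ ^ (1-p) := by rw [← hdiv]; exact hDp1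
        calc CA * m * (2 ^ (p-2) * D ^ (p-1))
            ≤ CA * m * (2 ^ (p-2) * (m ^ (p-1) * θ ^ (1-p))) := by
              apply mul_le_mul_of_nonneg_left _ (by positivity)
              exact mul_le_mul_of_nonneg_left hsub2 (by positivity)
          _ = (2 ^ (p-2) * CA * θ ^ (1-p)) * (m ^ (p-1) * m) := by ring
          _ = (2 ^ (p-2) * CA * θ ^ (1-p)) * m ^ p := by
              rw [rpow_mul_self' hm (by intro hc; linarith)]
              ring_nf
      have t1 : 0 ≤ cA/4 * (S ^ (p-2) * D ^ (2:ℝ)) := by positivity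
      have t2 : 0 ≤ (2 * 4 ^ (p-2) * CA + 2 ^ (p-2) * CA * θ ^ (1-p)) * (m * h ^ (p-1)) := by
        positivity
      have t3 : 0 ≤ (2 * 4 ^ (p-2) * CA) * m ^ p := by positivity
      linarith [key, key2, t1, t2, t3]

lemma energy_claim2 {p q cA : ℝ} (hp2 : 2 ≤ p) (hpq : 1/p + 1/q = 1) (hcA : 0 < cA) :
    ∃ C2 : ℝ, 0 < C2 ∧ ∀ n h D S : ℝ, 0 ≤ n → 0 ≤ h → 0 ≤ D → D ≤ S → S ≤ 2*h + D →
      D * n ≤ cA/4 * (S ^ (p-2) * D ^ (2:ℝ)) + C2 * (n * h) + C2 * n ^ q := by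
  obtain ⟨hq1, hqp, -⟩ := energy_conj_facts hp2 hpq
  have hθ : (0:ℝ) < cA/4 := by linarith
  refine ⟨2 + (cA/4) ^ (1-q), by positivity, ?_⟩
  intro n h D S hn hh hD hDS hS
  have hS0 : 0 ≤ S := le_trans hD hDS
  have hD2 : D ^ (2:ℝ) = D * D := by
    rw [show (2:ℝ) = ((2:ℕ):ℝ) from by norm_num, Real.rpow_natCast, sq]
  have tpos : 0 ≤ (cA/4) ^ (1-q) := Real.rpow_nonneg hθ.le _
  by_cases hcase : D ≤ 2*h
  · have : D * n ≤ 2 * (n * h) := by nlinarith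
    have t1 : 0 ≤ cA/4 * (S ^ (p-2) * D ^ (2:ℝ)) := by positivity
    have t3 : 0 ≤ (2 + (cA/4) ^ (1-q)) * n ^ q := by positivity
    nlinarith [Real.rpow_nonneg hn q, mul_nonneg hn hh]
  · push_neg at hcase
    have hDpos : 0 < D := by linarith
    by_cases hn2 : n ≤ (cA/4) * D ^ (p-1)
    · have hDp : D ^ (p-1) * D = D ^ p := by
        rw [rpow_mul_self' hD (by intro hc; linarith)]; ring_nf
      have hDp' : D ^ (p-2) * D * D = D ^ p := by
        rw [rpow_mul_self' hD (by intro hc; linarith), show p - 2 + 1 = p - 1 from by ring, hDp]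
      have key : D * n ≤ cA/4 * (D ^ (p-2) * D ^ (2:ℝ)) := by
        rw [hD2]
        calc D * n ≤ D * ((cA/4) * D ^ (p-1)) := mul_le_mul_of_nonneg_left hn2 hD
          _ = cA/4 * (D ^ (p-1) * D) := by ring
          _ = cA/4 * (D ^ (p-2) * (D * D)) := by rw [hDp, ← hDp']; ring
      have hmono : D ^ (p-2) ≤ S ^ (p-2) := Real.rpow_le_rpow hD hDS (by linarith)
      have t2 : 0 ≤ (2 + (cA/4) ^ (1-q)) * (n * h) := by positivity
      have t3 : 0 ≤ (2 + (cA/4) ^ (1-q)) * n ^ q := by positivity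
      have hd2 : 0 ≤ D ^ (2:ℝ) := Real.rpow_nonneg hD _
      have bridge := mul_le_mul_of_nonneg_left (mul_le_mul_of_nonneg_right hmono hd2) hθ.le
      linarith [key, bridge, t2, t3]
    · push_neg at hn2
      have hnpos : 0 < n := lt_of_le_of_lt (by positivity) hn2
      have hq10 : 0 < q - 1 := by linarith
      have hstep : D ≤ (n/(cA/4)) ^ (q-1) := by
        have h1 : D ^ (p-1) ≤ n / (cA/4) := by
          rw [le_div_iff₀ hθ]; nlinarith
        have h2 : (D ^ (p-1)) ^ (q-1) ≤ (n/(cA/4)) ^ (q-1) :=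
          Real.rpow_le_rpow (Real.rpow_nonneg hD _) h1 hq10.le
        have h3 : (D ^ (p-1)) ^ (q-1) = D := by
          rw [← Real.rpow_mul hD, show (p-1)*(q-1) = 1 from by linarith [hqp]]
          exact Real.rpow_one D
        linarith [h2, h3]
      have hdivn : (n/(cA/4)) ^ (q-1) = n ^ (q-1) * (cA/4) ^ (1-q) := by
        rw [Real.div_rpow hn hθ.le, div_eq_mul_inv, ← Real.rpow_neg hθ.le]
        ring_nf
      have key : D * n ≤ (cA/4) ^ (1-q) * n ^ q := by
        calc D * n ≤ (n ^ (q-1) * (cA/4) ^ (1-q)) * n := by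
              rw [← hdivn]
              exact mul_le_mul_of_nonneg_right hstep hn
          _ = (cA/4) ^ (1-q) * (n ^ (q-1) * n) := by ring
          _ = (cA/4) ^ (1-q) * n ^ q := by
              rw [rpow_mul_self' hn (by intro hc; linarith)]
              ring_nf
      have t1 : 0 ≤ cA/4 * (S ^ (p-2) * D ^ (2:ℝ)) := by positivity
      have t2 : 0 ≤ (2 + (cA/4) ^ (1-q)) * (n * h) := by positivity
      have t4 : 0 ≤ n ^ q := Real.rpow_nonneg hn _
      nlinarith [key, t1, t2, t4]

/-- The pointwise energy estimate. -/
lemma energy_ptwise {p q CA cA : ℝ} (hp2 : 2 ≤ p) (hpq : 1/p + 1/q = 1)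
    (hCA : 0 < CA) (hcA : 0 < cA) :
    ∃ C : ℝ, 0 < C ∧ ∀ Hv Jv Kv Lv av bv cv dv : V,
      Hv - Jv = av + cv → Kv - Lv = bv + dv →
      cA * ((‖Hv‖ + ‖Jv‖) ^ (p-2) * ‖Hv - Jv‖ ^ (2:ℝ)) ≤ ⟪Kv - Lv, Hv - Jv⟫ →
      ‖Kv - Lv‖ ≤ CA * ((‖Hv‖ + ‖Jv‖) ^ (p-2) * ‖Hv - Jv‖) →
      ⟪Hv - Jv, Kv - Lv⟫ ≤ C * ((‖av‖ ^ p + ‖bv‖ ^ q)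
        + (‖av‖ ^ p + ‖bv‖ ^ q) ^ (1/p) * (‖Hv‖ ^ p + ‖Kv‖ ^ q) ^ (1/q)
        + (‖av‖ ^ p + ‖bv‖ ^ q) ^ (1/q) * (‖Hv‖ ^ p + ‖Kv‖ ^ q) ^ (1/p))
        + 2 * ⟪cv, dv⟫ := by
  obtain ⟨hq1, hqp1, -⟩ := energy_conj_facts hp2 hpq
  have hp0 : (0:ℝ) < p := by linarith
  have hq0 : (0:ℝ) < q := by linarith
  obtain ⟨C1, hC1pos, hC1⟩ := energy_claim1 (cA := cA) hp2 hCA hcA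
  obtain ⟨C2, hC2pos, hC2⟩ := energy_claim2 (q := q) hp2 hpq hcA
  refine ⟨2*(C1 + C2 + 1), by positivity, ?_⟩
  intro Hv Jv Kv Lv av bv cv dv hu hv hmono hlip
  set m := ‖av‖ with hm
  set n := ‖bv‖ with hn
  set D := ‖Hv - Jv‖ with hD
  set S := ‖Hv‖ + ‖Jv‖ with hS
  set h := ‖Hv‖ with hh
  set F := ‖av‖ ^ p + ‖bv‖ ^ q with hF
  set G := ‖Hv‖ ^ p + ‖Kv‖ ^ q with hG
  clear_value m n D S h F G
  have hm0 : 0 ≤ m := hm ▸ norm_nonneg _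
  have hn0 : 0 ≤ n := hn ▸ norm_nonneg _
  have hD0 : 0 ≤ D := hD ▸ norm_nonneg _
  have hh0 : 0 ≤ h := hh ▸ norm_nonneg _
  have hF0 : 0 ≤ F := by
    have := Real.rpow_nonneg (norm_nonneg av) p
    have := Real.rpow_nonneg (norm_nonneg bv) q
    rw [hF]; linarith
  have hG0 : 0 ≤ G := by
    have := Real.rpow_nonneg (norm_nonneg Hv) p
    have := Real.rpow_nonneg (norm_nonneg Kv) q
    rw [hG]; linarith
  have hDS : D ≤ S := by rw [hD, hS, hh]; exact norm_sub_le _ _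
  have hS2h : S ≤ 2*h + D := by
    have hJ : ‖Jv‖ ≤ ‖Hv‖ + ‖Hv - Jv‖ := by
      simpa using norm_sub_le Hv (Hv - Jv)
    rw [hS, hh, hD]; linarith [hJ]
  have hid : ⟪Hv - Jv, Kv - Lv⟫ =
      ⟪av, Kv - Lv⟫ + ⟪Hv - Jv, bv⟫ - ⟪av, bv⟫ + ⟪cv, dv⟫ := by
    rw [hu, hv]
    simp only [inner_add_left, inner_add_right]
    ring
  have b1 : ⟪av, Kv - Lv⟫ ≤ m * ‖Kv - Lv‖ := by
    rw [hm]; exact real_inner_le_norm _ _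
  have b2 : ⟪Hv - Jv, bv⟫ ≤ D * n := by
    rw [hD, hn]; exact real_inner_le_norm _ _
  have b3 : -⟪av, bv⟫ ≤ m * n := by
    have h1 := abs_real_inner_le_norm av bv
    have h2 := neg_abs_le ⟪av, bv⟫
    rw [← hm, ← hn] at h1
    linarith
  have chain1 : m * ‖Kv - Lv‖ ≤ CA * m * (S ^ (p-2) * D) := by
    have := mul_le_mul_of_nonneg_left hlip hm0
    linarith [this]
  have c1b := hC1 m h D S hm0 hh0 hD0 hDS hS2h
  have c2b := hC2 n h D S hn0 hh0 hD0 hDS hS2h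
  have hE4 : cA/4 * (S ^ (p-2) * D ^ (2:ℝ)) ≤ ⟪Hv - Jv, Kv - Lv⟫ / 4 := by
    rw [real_inner_comm]
    linarith [hmono]
  have hmp : m ^ p ≤ F := by
    have := Real.rpow_nonneg (norm_nonneg bv) q
    rw [hm, hF]; linarith
  have hnq : n ^ q ≤ F := by
    have := Real.rpow_nonneg (norm_nonneg av) p
    rw [hn, hF]; linarith
  have hhp : h ^ p ≤ G := by
    have := Real.rpow_nonneg (norm_nonneg Kv) q
    rw [hh, hG]; linarith
  have hmF : m ≤ F ^ (1/p) := by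
    rw [self_eq_rpow_rpow hm0 hp0]
    exact Real.rpow_le_rpow (Real.rpow_nonneg hm0 _) hmp (by positivity)
  have hnF : n ≤ F ^ (1/q) := by
    rw [self_eq_rpow_rpow hn0 hq0]
    exact Real.rpow_le_rpow (Real.rpow_nonneg hn0 _) hnq (by positivity)
  have hhG : h ≤ G ^ (1/p) := by
    rw [self_eq_rpow_rpow hh0 hp0]
    exact Real.rpow_le_rpow (Real.rpow_nonneg hh0 _) hhp (by positivity)
  have hpq' : p * (1/q) = p - 1 := by
    have hpne : p ≠ 0 := ne_of_gt hp0
    have hqne : q ≠ 0 := ne_of_gt hq0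
    have h1q : 1/q = 1 - 1/p := by linarith
    rw [h1q, mul_sub, mul_one, mul_one_div, div_self hpne]
  have hh1G : h ^ (p-1) ≤ G ^ (1/q) := by
    rw [← hpq', Real.rpow_mul hh0]
    exact Real.rpow_le_rpow (Real.rpow_nonneg hh0 _) hhp (by positivity)
  have hmn : m * n ≤ F := by
    calc m * n ≤ F ^ (1/p) * F ^ (1/q) :=
          mul_le_mul hmF hnF hn0 (Real.rpow_nonneg hF0 _)
      _ = F := rpow_split_one' hF0 (by positivity) hpq
  have hmh : m * h ^ (p-1) ≤ F ^ (1/p) * G ^ (1/q) :=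
    mul_le_mul hmF hh1G (Real.rpow_nonneg hh0 _) (Real.rpow_nonneg hF0 _)
  have hnh : n * h ≤ F ^ (1/q) * G ^ (1/p) :=
    mul_le_mul hnF hhG hh0 (Real.rpow_nonneg hF0 _)
  have B1 : 0 ≤ F ^ (1/p) * G ^ (1/q) := by positivity
  have B2 : 0 ≤ F ^ (1/q) * G ^ (1/p) := by positivity
  have step : ⟪Hv - Jv, Kv - Lv⟫ ≤ ⟪Hv - Jv, Kv - Lv⟫/2
      + C1 * (m * h ^ (p-1)) + C1 * m ^ p + C2 * (n * h) + C2 * n ^ q + m*n + ⟪cv, dv⟫ := by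
    linarith [hid, b1, b2, b3, chain1, c1b, c2b, hE4]
  have half : ⟪Hv - Jv, Kv - Lv⟫/2 ≤ (C1 + C2 + 1) * (F + F ^ (1/p) * G ^ (1/q)
      + F ^ (1/q) * G ^ (1/p)) + ⟪cv, dv⟫ := by
    have e1 : C1 * (m * h ^ (p-1)) ≤ C1 * (F ^ (1/p) * G ^ (1/q)) :=
      mul_le_mul_of_nonneg_left hmh hC1pos.le
    have e2 : C1 * m ^ p ≤ C1 * F := mul_le_mul_of_nonneg_left hmp hC1pos.le
    have e3 : C2 * (n * h) ≤ C2 * (F ^ (1/q) * G ^ (1/p)) :=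
      mul_le_mul_of_nonneg_left hnh hC2pos.le
    have e4 : C2 * n ^ q ≤ C2 * F := mul_le_mul_of_nonneg_left hnq hC2pos.le
    have f1 : 0 ≤ C2 * (F ^ (1/p) * G ^ (1/q)) := mul_nonneg hC2pos.le B1
    have f2 : 0 ≤ C1 * (F ^ (1/q) * G ^ (1/p)) := mul_nonneg hC1pos.le B2
    have expand : (C1 + C2 + 1) * (F + F ^ (1/p) * G ^ (1/q) + F ^ (1/q) * G ^ (1/p))
        = C1 * F + C2 * F + F + C1 * (F ^ (1/p) * G ^ (1/q)) + C2 * (F ^ (1/p) * G ^ (1/q))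
          + F ^ (1/p) * G ^ (1/q) + C1 * (F ^ (1/q) * G ^ (1/p)) + C2 * (F ^ (1/q) * G ^ (1/p))
          + F ^ (1/q) * G ^ (1/p) := by ring
    have f3 : 0 ≤ C2 * F := mul_nonneg hC2pos.le hF0
    rw [expand]
    linarith [step, e1, e2, e3, e4, hmn, f1, f2, B1, B2, f3]
  linarith [half]

/-! ### Hölder / integrability helpers -/

lemma energy_integrable_norm_mul {μ : Measure X} {p q : ℝ} (hpq : Real.HolderConjugate p q)
    {f g : X → V} (hf : MemLp f (ENNReal.ofReal p) μ) (hg : MemLp g (ENNReal.ofReal q) μ) :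
    Integrable (fun x => ‖f x‖ * ‖g x‖) μ := by
  have hcond : (1 : ℝ≥0∞)/1 = 1/(ENNReal.ofReal q) + 1/(ENNReal.ofReal p) := by
    simp only [one_div, inv_one]
    rw [add_comm]
    exact hpq.inv_add_inv_ennreal.symm
  have hsmul : MemLp ((fun x => ‖g x‖) • (fun x => ‖f x‖)) 1 μ :=
    by haveI : ENNReal.HolderTriple (ENNReal.ofReal q) (ENNReal.ofReal p) 1 :=
        ⟨by simpa only [one_div, inv_one] using hcond.symm⟩
       exact MemLp.smul hf.norm hg.norm
  have : Integrable ((fun x => ‖g x‖) • (fun x => ‖f x‖)) μ :=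
    memLp_one_iff_integrable.mp hsmul
  refine this.congr (Filter.Eventually.of_forall fun x => ?_)
  simp [Pi.smul_apply', smul_eq_mul, mul_comm]

lemma energy_integrable_inner {μ : Measure X} {p q : ℝ} (hpq : Real.HolderConjugate p q)
    {f g : X → V} (hf : MemLp f (ENNReal.ofReal p) μ) (hg : MemLp g (ENNReal.ofReal q) μ) :
    Integrable (fun x => ⟪f x, g x⟫) μ := by
  refine (energy_integrable_norm_mul hpq hf hg).mono'
    (hf.aestronglyMeasurable.inner hg.aestronglyMeasurable)
    (Filter.Eventually.of_forall fun x => ?_)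
  rw [Real.norm_eq_abs]
  exact abs_real_inner_le_norm _ _

lemma energy_integral_norm_mul_le {μ : Measure X} {p q : ℝ} (hpq : Real.HolderConjugate p q)
    {f g : X → V} (hf : MemLp f (ENNReal.ofReal p) μ) (hg : MemLp g (ENNReal.ofReal q) μ) :
    ∫ x, ‖f x‖ * ‖g x‖ ∂μ ≤
      (eLpNorm f (ENNReal.ofReal p) μ).toReal * (eLpNorm g (ENNReal.ofReal q) μ).toReal := by
  have hp0 : ENNReal.ofReal p ≠ 0 := by
    simp only [ne_eq, ENNReal.ofReal_eq_zero, not_le]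
    exact hpq.pos
  have hq0 : ENNReal.ofReal q ≠ 0 := by
    simp only [ne_eq, ENNReal.ofReal_eq_zero, not_le]
    exact hpq.symm.pos
  rw [hf.eLpNorm_eq_integral_rpow_norm hp0 ENNReal.ofReal_ne_top,
    hg.eLpNorm_eq_integral_rpow_norm hq0 ENNReal.ofReal_ne_top]
  simp only [ENNReal.toReal_ofReal hpq.nonneg, ENNReal.toReal_ofReal hpq.symm.nonneg]
  have hfpos : (0:ℝ) ≤ (∫ a, ‖f a‖ ^ p ∂μ) ^ p⁻¹ :=
    Real.rpow_nonneg (integral_nonneg fun x => Real.rpow_nonneg (norm_nonneg _) _) _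
  have hgpos : (0:ℝ) ≤ (∫ a, ‖g a‖ ^ q ∂μ) ^ q⁻¹ :=
    Real.rpow_nonneg (integral_nonneg fun x => Real.rpow_nonneg (norm_nonneg _) _) _
  rw [ENNReal.toReal_ofReal hfpos, ENNReal.toReal_ofReal hgpos, ← one_div, ← one_div]
  exact MeasureTheory.integral_mul_norm_le_Lp_mul_Lq hpq hf hg

/-! ### The pairing (orthogonality) lemma -/

lemma energy_pairing {μ : Measure X} {K : Set (X → V)} {p q : ℝ}
    (hpq : Real.HolderConjugate p q) {φ ψ : X → V}
    (hφ : φ ∈ LsCl μ K p) (hψ : ψ ∈ LsCl μ (OrthCompl μ K) q) :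
    ∫ x, ⟪φ x, ψ x⟫ ∂μ = 0 := by
  have Pφ : MemLp φ (ENNReal.ofReal p) μ := hφ.1
  have Pψ : MemLp ψ (ENNReal.ofReal q) μ := hψ.1
  set Np := (eLpNorm φ (ENNReal.ofReal p) μ).toReal with hNpd
  set Nq := (eLpNorm ψ (ENNReal.ofReal q) μ).toReal with hNqd
  have hNp : 0 ≤ Np := ENNReal.toReal_nonneg
  have hNq : 0 ≤ Nq := ENNReal.toReal_nonneg
  have key : ∀ δ : ℝ, 0 < δ → |∫ x, ⟪φ x, ψ x⟫ ∂μ| ≤ δ := by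
    intro δ hδ
    set ε := min 1 (δ / (Np + Nq + 2)) with hεd
    have hε0 : 0 < ε := lt_min one_pos (by positivity)
    have hε1 : ε ≤ 1 := min_le_left _ _
    have hεδ : ε * (Np + Nq + 2) ≤ δ := by
      have h1 : ε ≤ δ / (Np + Nq + 2) := min_le_right _ _
      have h2 : (0:ℝ) < Np + Nq + 2 := by linarith
      calc ε * (Np + Nq + 2) ≤ (δ / (Np + Nq + 2)) * (Np + Nq + 2) := by gcongr
        _ = δ := by field_simp
    obtain ⟨g, hgK, hgL, hgc⟩ := hφ.2 ε hε0
    obtain ⟨h, hhO, hhL, hhc⟩ := hψ.2 ε hε0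
    have Pg : MemLp g (ENNReal.ofReal p) μ := hgL
    have Ph : MemLp h (ENNReal.ofReal q) μ := hhL
    have Pφg : MemLp (fun x => φ x - g x) (ENNReal.ofReal p) μ := Pφ.sub Pg
    have Pψh : MemLp (fun x => ψ x - h x) (ENNReal.ofReal q) μ := Pψ.sub Ph
    have hgc' : (eLpNorm (φ - g) (ENNReal.ofReal p) μ).toReal ≤ ε :=
      ENNReal.toReal_le_of_le_ofReal hε0.le hgc.le
    have hhc' : (eLpNorm (ψ - h) (ENNReal.ofReal q) μ).toReal ≤ ε :=
      ENNReal.toReal_le_of_le_ofReal hε0.le hhc.le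
    have hNg : (eLpNorm g (ENNReal.ofReal p) μ).toReal ≤ Np + ε := by
      apply ENNReal.toReal_le_of_le_ofReal (by positivity)
      have hgd : g = φ - (φ - g) := by ext x; simp
      have tri : eLpNorm g (ENNReal.ofReal p) μ ≤
          eLpNorm φ (ENNReal.ofReal p) μ + eLpNorm (φ - g) (ENNReal.ofReal p) μ := by
        nth_rewrite 1 [hgd]
        exact eLpNorm_sub_le Pφ.aestronglyMeasurable (Pφ.sub Pg).aestronglyMeasurable
          (by exact_mod_cast ENNReal.one_le_ofReal.mpr (Real.holderConjugate_iff.mp hpq).1.le)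
      rw [ENNReal.ofReal_add hNp hε0.le]
      refine le_trans tri (add_le_add ?_ hgc.le)
      rw [hNpd, ENNReal.ofReal_toReal Pφ.eLpNorm_ne_top]
    have i1 : Integrable (fun x => ⟪φ x - g x, ψ x⟫) μ := energy_integrable_inner hpq Pφg Pψ
    have i2 : Integrable (fun x => ⟪g x, ψ x - h x⟫) μ := energy_integrable_inner hpq Pg Pψh
    have i3 : Integrable (fun x => ⟪g x, h x⟫) μ := energy_integrable_inner hpq Pg Ph
    have hsplit : ∫ x, ⟪φ x, ψ x⟫ ∂μ =
        (∫ x, ⟪φ x - g x, ψ x⟫ ∂μ) + (∫ x, ⟪g x, ψ x - h x⟫ ∂μ) + ∫ x, ⟪g x, h x⟫ ∂μ := by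
      have hptw : ∫ x, ⟪φ x, ψ x⟫ ∂μ =
          ∫ x, (⟪φ x - g x, ψ x⟫ + ⟪g x, ψ x - h x⟫ + ⟪g x, h x⟫) ∂μ := by
        refine integral_congr_ae (Filter.Eventually.of_forall fun x => ?_)
        simp only [inner_sub_left, inner_sub_right]
        ring
      have i12 : Integrable (fun x => ⟪φ x - g x, ψ x⟫ + ⟪g x, ψ x - h x⟫) μ := i1.add i2
      rw [hptw, integral_add i12 i3, integral_add i1 i2]
    have hz : ∫ x, ⟪g x, h x⟫ ∂μ = 0 := hhO.2 g hgK
    have e1 : |∫ x, ⟪φ x - g x, ψ x⟫ ∂μ| ≤ ε * Nq := by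
      have habs : |∫ x, ⟪φ x - g x, ψ x⟫ ∂μ| ≤ ∫ x, ‖φ x - g x‖ * ‖ψ x‖ ∂μ := by
        rw [← Real.norm_eq_abs]
        refine le_trans (norm_integral_le_integral_norm _) ?_
        refine integral_mono_ae i1.norm (energy_integrable_norm_mul hpq Pφg Pψ)
          (Filter.Eventually.of_forall fun x => ?_)
        simpa [Real.norm_eq_abs] using abs_real_inner_le_norm (φ x - g x) (ψ x)
      refine le_trans habs (le_trans (energy_integral_norm_mul_le hpq Pφg Pψ) ?_)
      have : eLpNorm (fun x => φ x - g x) (ENNReal.ofReal p) μ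
          = eLpNorm (φ - g) (ENNReal.ofReal p) μ := rfl
      rw [this]
      exact mul_le_mul hgc' le_rfl hNq hε0.le
    have e2 : |∫ x, ⟪g x, ψ x - h x⟫ ∂μ| ≤ (Np + ε) * ε := by
      have habs : |∫ x, ⟪g x, ψ x - h x⟫ ∂μ| ≤ ∫ x, ‖g x‖ * ‖ψ x - h x‖ ∂μ := by
        rw [← Real.norm_eq_abs]
        refine le_trans (norm_integral_le_integral_norm _) ?_
        refine integral_mono_ae i2.norm (energy_integrable_norm_mul hpq Pg Pψh)
          (Filter.Eventually.of_forall fun x => ?_)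
        simpa [Real.norm_eq_abs] using abs_real_inner_le_norm (g x) (ψ x - h x)
      refine le_trans habs (le_trans (energy_integral_norm_mul_le hpq Pg Pψh) ?_)
      have : eLpNorm (fun x => ψ x - h x) (ENNReal.ofReal q) μ
          = eLpNorm (ψ - h) (ENNReal.ofReal q) μ := rfl
      rw [this]
      exact mul_le_mul hNg hhc' ENNReal.toReal_nonneg (by positivity)
    calc |∫ x, ⟪φ x, ψ x⟫ ∂μ| =
        |(∫ x, ⟪φ x - g x, ψ x⟫ ∂μ) + (∫ x, ⟪g x, ψ x - h x⟫ ∂μ)| := by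
          rw [hsplit, hz, add_zero]
      _ ≤ |∫ x, ⟪φ x - g x, ψ x⟫ ∂μ| + |∫ x, ⟪g x, ψ x - h x⟫ ∂μ| := abs_add_le _ _
      _ ≤ ε * Nq + (Np + ε) * ε := add_le_add e1 e2
      _ ≤ ε * (Np + Nq + 2) := by nlinarith [hε0.le, hε1, hNp, hNq]
      _ ≤ δ := hεδ
  have habs : |∫ x, ⟪φ x, ψ x⟫ ∂μ| ≤ 0 := by
    refine le_of_forall_pos_le_add fun δ hδ => ?_
    rw [zero_add]
    exact key δ hδ
  exact abs_eq_zero.mp (le_antisymm habs (abs_nonneg _))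

/-! ### Orthogonality of differences -/

lemma energy_orth_diff {μ : Measure X} {K : Set (X → V)} {p q : ℝ}
    (hpq : Real.HolderConjugate p q) {α αu β βu : X → V}
    (hα : α ∈ LsCl μ K p) (hαu : αu ∈ LsCl μ K p)
    (hβ : β ∈ LsCl μ (OrthCompl μ K) q) (hβu : βu ∈ LsCl μ (OrthCompl μ K) q) :
    ∫ x, ⟪α x - αu x, β x - βu x⟫ ∂μ = 0 := by
  have Pα : MemLp α (ENNReal.ofReal p) μ := hα.1
  have Pαu : MemLp αu (ENNReal.ofReal p) μ := hαu.1
  have Pβ : MemLp β (ENNReal.ofReal q) μ := hβ.1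
  have Pβu : MemLp βu (ENNReal.ofReal q) μ := hβu.1
  have i1 : Integrable (fun x => ⟪α x, β x⟫) μ := energy_integrable_inner hpq Pα Pβ
  have i2 : Integrable (fun x => ⟪α x, βu x⟫) μ := energy_integrable_inner hpq Pα Pβu
  have i3 : Integrable (fun x => ⟪αu x, β x⟫) μ := energy_integrable_inner hpq Pαu Pβ
  have i4 : Integrable (fun x => ⟪αu x, βu x⟫) μ := energy_integrable_inner hpq Pαu Pβu
  have i12 : Integrable (fun x => ⟪α x, β x⟫ - ⟪α x, βu x⟫) μ := i1.sub i2
  have i123 : Integrable (fun x => ⟪α x, β x⟫ - ⟪α x, βu x⟫ - ⟪αu x, β x⟫) μ := i12.sub i3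
  have hptw : ∫ x, ⟪α x - αu x, β x - βu x⟫ ∂μ =
      ∫ x, (⟪α x, β x⟫ - ⟪α x, βu x⟫ - ⟪αu x, β x⟫ + ⟪αu x, βu x⟫) ∂μ := by
    refine integral_congr_ae (Filter.Eventually.of_forall fun x => ?_)
    simp only [inner_sub_left, inner_sub_right]
    ring
  rw [hptw, integral_add i123 i4, integral_sub i12 i3, integral_sub i1 i2,
    energy_pairing hpq hα hβ, energy_pairing hpq hα hβu,
    energy_pairing hpq hαu hβ, energy_pairing hpq hαu hβu]
  norm_num

/-! ### Truncations belong to `L^s` -/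

lemma energy_memLp_tr {μ : Measure X} {p q t s : ℝ} {a b g : X → V}
    (ha : AEStronglyMeasurable a μ) (hb : AEStronglyMeasurable b μ)
    (hg : MemLp g (ENNReal.ofReal s) μ) :
    MemLp (upTr p q a b t g) (ENNReal.ofReal s) μ ∧
    MemLp (loTr p q a b t g) (ENNReal.ofReal s) μ := by
  obtain ⟨a₀, ha₀, hae⟩ := ha
  obtain ⟨b₀, hb₀, hbe⟩ := hb
  obtain ⟨g₀, hg₀, hge⟩ := hg.aestronglyMeasurable
  have hmeas : Measurable fun x => ‖a₀ x‖ ^ p + ‖b₀ x‖ ^ q := by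
    apply Measurable.add
    · exact (ha₀.measurable.norm).pow measurable_const
    · exact (hb₀.measurable.norm).pow measurable_const
  have hups : MeasurableSet {x | t < ‖a₀ x‖ ^ p + ‖b₀ x‖ ^ q} :=
    measurableSet_lt measurable_const hmeas
  have hlos : MeasurableSet {x | ‖a₀ x‖ ^ p + ‖b₀ x‖ ^ q ≤ t} :=
    measurableSet_le hmeas measurable_const
  constructor
  · refine MemLp.of_le hg
      ⟨Set.indicator {x | t < ‖a₀ x‖ ^ p + ‖b₀ x‖ ^ q} g₀, hg₀.indicator hups, ?_⟩
      (Filter.Eventually.of_forall fun x => ?_)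
    · filter_upwards [hae, hbe, hge] with x h1 h2 h3
      simp only [upTr, br, Set.indicator_apply, Set.mem_setOf_eq, h1, h2, h3]
    · exact norm_indicator_le_norm_self _ _
  · refine MemLp.of_le hg
      ⟨Set.indicator {x | ‖a₀ x‖ ^ p + ‖b₀ x‖ ^ q ≤ t} g₀, hg₀.indicator hlos, ?_⟩
      (Filter.Eventually.of_forall fun x => ?_)
    · filter_upwards [hae, hbe, hge] with x h1 h2 h3
      simp only [loTr, br, Set.indicator_apply, Set.mem_setOf_eq, h1, h2, h3]
    · exact norm_indicator_le_norm_self _ _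

/-! ### The main integral estimate -/

lemma energy_main {μ : Measure X} {K : Set (X → V)} {p q CA cA : ℝ}
    (hp2 : 2 ≤ p) (hpq0 : 1/p + 1/q = 1) (hCA : 0 < CA) (hcA : 0 < cA)
    {A : X → V → V} (hA : IsPStructure μ p A CA cA) :
    ∃ C : ℝ, ∀ a b α β a' b' α' β' : X → V,
      MemLp a (ENNReal.ofReal p) μ → MemLp b (ENNReal.ofReal q) μ →
      MemLp a' (ENNReal.ofReal p) μ → MemLp b' (ENNReal.ofReal q) μ →
      Solves μ K A p q a b α β → Solves μ K A p q a' b' α' β' →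
      ∫ x, ⟪(a x + α x) - (a' x + α' x), (b x + β x) - (b' x + β' x)⟫ ∂μ ≤
        C * ((∫ x, br p q (a - a') (b - b') x ∂μ)
          + (∫ x, br p q (a - a') (b - b') x ^ (1/p) *
              br p q (fun y => a y + α y) (fun y => b y + β y) x ^ (1/q) ∂μ)
          + (∫ x, br p q (a - a') (b - b') x ^ (1/q) *
              br p q (fun y => a y + α y) (fun y => b y + β y) x ^ (1/p) ∂μ)) := by
  obtain ⟨hq1, -, -⟩ := energy_conj_facts hp2 hpq0
  have hp1 : (1:ℝ) < p := by linarith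
  have hconj : Real.HolderConjugate p q := Real.holderConjugate_iff.mpr ⟨hp1, by rw [← one_div, ← one_div]; exact hpq0⟩
  have hp0 : (0:ℝ) < p := hconj.pos
  have hq0 : (0:ℝ) < q := hconj.symm.pos
  have hpne : ENNReal.ofReal p ≠ 0 := by
    simp only [ne_eq, ENNReal.ofReal_eq_zero, not_le]; exact hp0
  have hqne : ENNReal.ofReal q ≠ 0 := by
    simp only [ne_eq, ENNReal.ofReal_eq_zero, not_le]; exact hq0
  obtain ⟨C, hCpos, hC⟩ := energy_ptwise (V := V) hp2 hpq0 hCA hcA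
  refine ⟨C, ?_⟩
  intro a b α β a' b' α' β' Pa Pb Pa' Pb' hsol hsol'
  obtain ⟨hα, hβ, heq⟩ := hsol
  obtain ⟨hα', hβ', heq'⟩ := hsol'
  have Pα : MemLp α (ENNReal.ofReal p) μ := hα.1
  have Pβ : MemLp β (ENNReal.ofReal q) μ := hβ.1
  have Pα' : MemLp α' (ENNReal.ofReal p) μ := hα'.1
  have Pβ' : MemLp β' (ENNReal.ofReal q) μ := hβ'.1
  have Pu : MemLp (fun x => (a x + α x) - (a' x + α' x)) (ENNReal.ofReal p) μ :=
    (Pa.add Pα).sub (Pa'.add Pα')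
  have Pv : MemLp (fun x => (b x + β x) - (b' x + β' x)) (ENNReal.ofReal q) μ :=
    (Pb.add Pβ).sub (Pb'.add Pβ')
  have PH : MemLp (fun y => a y + α y) (ENNReal.ofReal p) μ := Pa.add Pα
  have PH' : MemLp (fun y => b y + β y) (ENNReal.ofReal q) μ := Pb.add Pβ
  have Paa : MemLp (a - a') (ENNReal.ofReal p) μ := Pa.sub Pa'
  have Pbb : MemLp (b - b') (ENNReal.ofReal q) μ := Pb.sub Pb'
  -- integrability of all the pieces
  have intF : Integrable (fun x => br p q (a - a') (b - b') x) μ := by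
    have h1 := Paa.integrable_norm_rpow hpne ENNReal.ofReal_ne_top
    have h2 := Pbb.integrable_norm_rpow hqne ENNReal.ofReal_ne_top
    rw [ENNReal.toReal_ofReal hp0.le] at h1
    rw [ENNReal.toReal_ofReal hq0.le] at h2
    exact h1.add h2
  have intG : Integrable (fun x => br p q (fun y => a y + α y) (fun y => b y + β y) x) μ := by
    have h1 := PH.integrable_norm_rpow hpne ENNReal.ofReal_ne_top
    have h2 := PH'.integrable_norm_rpow hqne ENNReal.ofReal_ne_top
    rw [ENNReal.toReal_ofReal hp0.le] at h1
    rw [ENNReal.toReal_ofReal hq0.le] at h2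
    exact h1.add h2
  have hF0 : ∀ x, 0 ≤ br p q (a - a') (b - b') x := fun x =>
    add_nonneg (Real.rpow_nonneg (norm_nonneg _) _) (Real.rpow_nonneg (norm_nonneg _) _)
  have hG0 : ∀ x, 0 ≤ br p q (fun y => a y + α y) (fun y => b y + β y) x := fun x =>
    add_nonneg (Real.rpow_nonneg (norm_nonneg _) _) (Real.rpow_nonneg (norm_nonneg _) _)
  have mF : AEStronglyMeasurable (fun x => br p q (a - a') (b - b') x) μ :=
    intF.aestronglyMeasurable
  have mG : AEStronglyMeasurable (fun x => br p q (fun y => a y + α y)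
      (fun y => b y + β y) x) μ := intG.aestronglyMeasurable
  have intB1 : Integrable (fun x => br p q (a - a') (b - b') x ^ (1/p) *
      br p q (fun y => a y + α y) (fun y => b y + β y) x ^ (1/q)) μ := by
    have mB : AEStronglyMeasurable (fun x => br p q (a - a') (b - b') x ^ (1/p) *
        br p q (fun y => a y + α y) (fun y => b y + β y) x ^ (1/q)) μ := by
      apply AEStronglyMeasurable.mul
      · exact ((mF.aemeasurable.pow aemeasurable_const)).aestronglyMeasurable
      · exact ((mG.aemeasurable.pow aemeasurable_const)).aestronglyMeasurable
    refine (intF.add intG).mono' mB (Filter.Eventually.of_forall fun x => ?_)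
    rw [Real.norm_eq_abs,
      abs_of_nonneg (mul_nonneg (Real.rpow_nonneg (hF0 x) _) (Real.rpow_nonneg (hG0 x) _))]
    exact mul_rpow_le_add' (hF0 x) (hG0 x) (by positivity) (by positivity) hpq0
  have intB2 : Integrable (fun x => br p q (a - a') (b - b') x ^ (1/q) *
      br p q (fun y => a y + α y) (fun y => b y + β y) x ^ (1/p)) μ := by
    have mB : AEStronglyMeasurable (fun x => br p q (a - a') (b - b') x ^ (1/q) *
        br p q (fun y => a y + α y) (fun y => b y + β y) x ^ (1/p)) μ := by
      apply AEStronglyMeasurable.mul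
      · exact ((mF.aemeasurable.pow aemeasurable_const)).aestronglyMeasurable
      · exact ((mG.aemeasurable.pow aemeasurable_const)).aestronglyMeasurable
    refine (intF.add intG).mono' mB (Filter.Eventually.of_forall fun x => ?_)
    rw [Real.norm_eq_abs,
      abs_of_nonneg (mul_nonneg (Real.rpow_nonneg (hF0 x) _) (Real.rpow_nonneg (hG0 x) _))]
    exact mul_rpow_le_add' (hF0 x) (hG0 x) (by positivity) (by positivity)
      (by rw [add_comm]; exact hpq0)
  have intuv : Integrable
      (fun x => ⟪(a x + α x) - (a' x + α' x), (b x + β x) - (b' x + β' x)⟫) μ :=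
    energy_integrable_inner hconj Pu Pv
  have intW : Integrable (fun x => ⟪α x - α' x, β x - β' x⟫) μ :=
    energy_integrable_inner hconj (Pα.sub Pα') (Pβ.sub Pβ')
  have hWzero : ∫ x, ⟪α x - α' x, β x - β' x⟫ ∂μ = 0 :=
    energy_orth_diff hconj hα hα' hβ hβ'
  -- the pointwise a.e. estimate
  have hae : ∀ᵐ x ∂μ, ⟪(a x + α x) - (a' x + α' x), (b x + β x) - (b' x + β' x)⟫ ≤
      C * (br p q (a - a') (b - b') x
        + br p q (a - a') (b - b') x ^ (1/p) *
            br p q (fun y => a y + α y) (fun y => b y + β y) x ^ (1/q)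
        + br p q (a - a') (b - b') x ^ (1/q) *
            br p q (fun y => a y + α y) (fun y => b y + β y) x ^ (1/p))
      + 2 * ⟪α x - α' x, β x - β' x⟫ := by
    filter_upwards [hA.monotone, hA.lipschitz, heq, heq'] with x hmono hlip he he'
    have he₁ : A x (a x + α x) = b x + β x := he
    have he₂ : A x (a' x + α' x) = b' x + β' x := he'
    have h1 := hmono (a x + α x) (a' x + α' x)
    have h2 := hlip (a x + α x) (a' x + α' x)
    rw [he₁, he₂] at h1 h2
    have := hC (a x + α x) (a' x + α' x) (b x + β x) (b' x + β' x)
      (a x - a' x) (b x - b' x) (α x - α' x) (β x - β' x)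
      (by abel) (by abel) h1 h2
    simpa only [br, Pi.sub_apply] using this
  have intRHS : Integrable (fun x =>
      C * (br p q (a - a') (b - b') x
        + br p q (a - a') (b - b') x ^ (1/p) *
            br p q (fun y => a y + α y) (fun y => b y + β y) x ^ (1/q)
        + br p q (a - a') (b - b') x ^ (1/q) *
            br p q (fun y => a y + α y) (fun y => b y + β y) x ^ (1/p))
      + 2 * ⟪α x - α' x, β x - β' x⟫) μ := by
    exact (((intF.add intB1).add intB2).const_mul C).add (intW.const_mul 2)
  have hle := integral_mono_ae intuv intRHS hae
  have hsplit : ∫ x, (C * (br p q (a - a') (b - b') x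
        + br p q (a - a') (b - b') x ^ (1/p) *
            br p q (fun y => a y + α y) (fun y => b y + β y) x ^ (1/q)
        + br p q (a - a') (b - b') x ^ (1/q) *
            br p q (fun y => a y + α y) (fun y => b y + β y) x ^ (1/p))
      + 2 * ⟪α x - α' x, β x - β' x⟫) ∂μ
      = C * ((∫ x, br p q (a - a') (b - b') x ∂μ)
          + (∫ x, br p q (a - a') (b - b') x ^ (1/p) *
              br p q (fun y => a y + α y) (fun y => b y + β y) x ^ (1/q) ∂μ)
          + (∫ x, br p q (a - a') (b - b') x ^ (1/q) *
              br p q (fun y => a y + α y) (fun y => b y + β y) x ^ (1/p) ∂μ))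
        + 2 * ∫ x, ⟪α x - α' x, β x - β' x⟫ ∂μ := by
    have j1 : Integrable (fun x =>
        C * (br p q (a - a') (b - b') x
        + br p q (a - a') (b - b') x ^ (1/p) *
            br p q (fun y => a y + α y) (fun y => b y + β y) x ^ (1/q)
        + br p q (a - a') (b - b') x ^ (1/q) *
            br p q (fun y => a y + α y) (fun y => b y + β y) x ^ (1/p))) μ :=
      ((intF.add intB1).add intB2).const_mul C
    have j2 : Integrable (fun x => (2:ℝ) * ⟪α x - α' x, β x - β' x⟫) μ := intW.const_mul 2
    have j3 : Integrable (fun x => br p q (a - a') (b - b') x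
        + br p q (a - a') (b - b') x ^ (1/p) *
            br p q (fun y => a y + α y) (fun y => b y + β y) x ^ (1/q)) μ := intF.add intB1
    rw [integral_add j1 j2, integral_const_mul, integral_const_mul,
      integral_add j3 intB2, integral_add intF intB1]
  rw [hsplit, hWzero, mul_zero, add_zero] at hle
  exact hle

/-- the energy estimates, Lemma "energy" of the paper.  There is a
constant `C`, independent of `f` and `t`, such that for every `f = (a,b) ∈ L^* × L^*`
with `ℜf = (α,β)` (so `H = f + ℜf`), every `t ≥ 0`, and the solutions
`ℜf^t = (αu,βu)`, `ℜf_t = (αl,βl)` for the truncated data: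
`∫ E^t ≤ C (∫ [f_t] + ∫ [f_t]^{1/p}[H]^{1/q} + ∫ [f_t]^{1/q}[H]^{1/p})`  and
`∫ E_t ≤ C (∫ [f^t] + ∫ [f^t]^{1/p}[H]^{1/q} + ∫ [f^t]^{1/q}[H]^{1/p})`,
where `E^t = ⟨H − H^t | H' − H'^t⟩` and `E_t = ⟨H − H_t | H' − H'_t⟩` are the energy
integrands. -/
theorem energy_estimates
    (μ : Measure X) [SigmaFinite μ]
    (K : Set (X → V)) (hK : IsClosedL2Subspace μ K)
    (𝔮 : ℝ) (𝔭 : ℝ≥0∞) (h𝔮₁ : 1 ≤ 𝔮) (h𝔮₂ : 𝔮 < 2) (h𝔭 : 2 < 𝔭)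
    (hconj : (ENNReal.ofReal 𝔮)⁻¹ + 𝔭⁻¹ = 1)
    (hproj : ∀ s : ℝ, 𝔮 < s → ENNReal.ofReal s < 𝔭 → ProjBounded μ K s)
    (p q : ℝ) (hp : 1 < p) (hpq : 1 / p + 1 / q = 1)
    (h𝔮q : 𝔮 < q) (hqp : q ≤ p) (hp𝔭 : ENNReal.ofReal p < 𝔭)
    (A : X → V → V) (CA cA : ℝ) (hCA : 0 < CA) (hcA : 0 < cA)
    (hA : IsPStructure μ p A CA cA) :
    ∃ C : ℝ, ∀ a b α β : X → V, MemLstar μ a → MemLstar μ b →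
      Solves μ K A p q a b α β →
      ∀ t : ℝ, 0 ≤ t →
      ∀ αu βu αl βl : X → V,
        Solves μ K A p q (upTr p q a b t a) (upTr p q a b t b) αu βu →
        Solves μ K A p q (loTr p q a b t a) (loTr p q a b t b) αl βl →
        (∫ x, ⟪(a x + α x) - (upTr p q a b t a x + αu x),
               (b x + β x) - (upTr p q a b t b x + βu x)⟫ ∂μ ≤
          C * (∫ x, br p q (loTr p q a b t a) (loTr p q a b t b) x ∂μ
             + ∫ x, br p q (loTr p q a b t a) (loTr p q a b t b) x ^ (1 / p) *
                 br p q (fun y => a y + α y) (fun y => b y + β y) x ^ (1 / q) ∂μ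
             + ∫ x, br p q (loTr p q a b t a) (loTr p q a b t b) x ^ (1 / q) *
                 br p q (fun y => a y + α y) (fun y => b y + β y) x ^ (1 / p) ∂μ)) ∧
        (∫ x, ⟪(a x + α x) - (loTr p q a b t a x + αl x),
               (b x + β x) - (loTr p q a b t b x + βl x)⟫ ∂μ ≤
          C * (∫ x, br p q (upTr p q a b t a) (upTr p q a b t b) x ∂μ
             + ∫ x, br p q (upTr p q a b t a) (upTr p q a b t b) x ^ (1 / p) *
                 br p q (fun y => a y + α y) (fun y => b y + β y) x ^ (1 / q) ∂μ
             + ∫ x, br p q (upTr p q a b t a) (upTr p q a b t b) x ^ (1 / q) *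
                 br p q (fun y => a y + α y) (fun y => b y + β y) x ^ (1 / p) ∂μ)) := by
  -- `q ≤ p` and conjugacy force `2 ≤ p`
  have hp0 : (0:ℝ) < p := by linarith
  have hq0 : (0:ℝ) < q := by
    by_contra hcon
    push_neg at hcon
    have h1 : 1/q ≤ 0 := div_nonpos_of_nonneg_of_nonpos (by norm_num) hcon
    have h2 : (1:ℝ) ≤ 1/p := by linarith
    have h3 : 1/p < 1 := by rw [div_lt_one hp0]; linarith
    linarith
  have hinv : 1/p ≤ 1/q := by
    apply one_div_le_one_div_of_le hq0 hqp
  have hp2 : 2 ≤ p := by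
    by_contra hcon
    push_neg at hcon
    have : 1/2 < 1/p := one_div_lt_one_div_of_lt hp0 hcon
    linarith
  obtain ⟨hq1, -, -⟩ := energy_conj_facts hp2 hpq
  obtain ⟨Cm, hCm⟩ := energy_main (μ := μ) (K := K) hp2 hpq hCA hcA hA
  refine ⟨Cm, ?_⟩
  intro a b α β ha hb hsol t ht αu βu αl βl hsolu hsoll
  have Pa : MemLp a (ENNReal.ofReal p) μ := ha.2 p (by linarith)
  have Pb : MemLp b (ENNReal.ofReal q) μ := hb.2 q hq1.le
  have hama : AEStronglyMeasurable a μ := Pa.aestronglyMeasurable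
  have hbma : AEStronglyMeasurable b μ := Pb.aestronglyMeasurable
  obtain ⟨Pau, Pal⟩ := energy_memLp_tr (p := p) (q := q) (t := t) hama hbma Pa
  obtain ⟨Pbu, Pbl⟩ := energy_memLp_tr (p := p) (q := q) (t := t) hama hbma Pb
  have hlo : ∀ g : X → V, loTr p q a b t g = g - upTr p q a b t g := by
    intro g
    funext x
    by_cases hx : br p q a b x ≤ t
    · have hx' : ¬ t < br p q a b x := not_lt.mpr hx
      simp [loTr, upTr, Set.indicator_apply, Set.mem_setOf_eq, hx, hx']
    · have hx' : t < br p q a b x := not_le.mp hx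
      simp [loTr, upTr, Set.indicator_apply, Set.mem_setOf_eq, hx, hx']
  have hup : ∀ g : X → V, upTr p q a b t g = g - loTr p q a b t g := by
    intro g
    funext x
    by_cases hx : br p q a b x ≤ t
    · have hx' : ¬ t < br p q a b x := not_lt.mpr hx
      simp [loTr, upTr, Set.indicator_apply, Set.mem_setOf_eq, hx, hx']
    · have hx' : t < br p q a b x := not_le.mp hx
      simp [loTr, upTr, Set.indicator_apply, Set.mem_setOf_eq, hx, hx']
  constructor
  · rw [hlo a, hlo b]
    exact hCm a b α β (upTr p q a b t a) (upTr p q a b t b) αu βu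
      Pa Pb Pau Pbu ⟨hsol.1, hsol.2.1, hsol.2.2⟩ hsolu
  · rw [hup a, hup b]
    exact hCm a b α β (loTr p q a b t a) (loTr p q a b t b) αl βl
      Pa Pb Pal Pbl ⟨hsol.1, hsol.2.1, hsol.2.2⟩ hsoll
end
end

section
/- Let 1 < p < ∞ and q = p/(p−1). If α ∈ L^p_+(X) and β ∈ L^q_-(X), then the function x ↦ ⟨α(x) | β(x)⟩ is integrable on X and ∫_X ⟨α(x) | β(x)⟩ dx = 0. -/
open MeasureTheory ENNReal
open scoped RealInnerProductSpace

noncomputable section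

variable {X : Type*} [MeasurableSpace X] {V : Type*}
  [NormedAddCommGroup V] [InnerProductSpace ℝ V] [FiniteDimensional ℝ V]

theorem holder_inner {μ : Measure X} {p q : ℝ} (hpq : Real.HolderConjugate p q)
    {f g : X → V} (hf : MemLp f (ENNReal.ofReal p) μ) (hg : MemLp g (ENNReal.ofReal q) μ) :
    Integrable (fun x => ⟪f x, g x⟫) μ ∧
    ‖∫ x, ⟪f x, g x⟫ ∂μ‖ ≤
      (eLpNorm f (ENNReal.ofReal p) μ).toReal * (eLpNorm g (ENNReal.ofReal q) μ).toReal := by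
  have hmeas : AEStronglyMeasurable (fun x => ⟪f x, g x⟫) μ := hf.1.inner hg.1
  have hpqr : (1 : ℝ≥0∞) / 1 = 1 / ENNReal.ofReal p + 1 / ENNReal.ofReal q := by
    simp only [one_div]
    rw [hpq.inv_add_inv_ennreal, inv_one]
  have hCS : ∀ᵐ x ∂μ, ‖(⟪f x, g x⟫ : ℝ)‖ ≤ ‖f x‖ * ‖g x‖ :=
    Filter.Eventually.of_forall fun x => by
      simpa using abs_real_inner_le_norm (f x) (g x)
  have hle : eLpNorm (fun x => ⟪f x, g x⟫) 1 μ ≤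
      eLpNorm f (ENNReal.ofReal p) μ * eLpNorm g (ENNReal.ofReal q) μ := by
    haveI : ENNReal.HolderTriple (ENNReal.ofReal p) (ENNReal.ofReal q) 1 :=
      ⟨by rw [hpq.inv_add_inv_ennreal, inv_one]⟩
    simpa using eLpNorm_le_eLpNorm_mul_eLpNorm'_of_norm hf.1 hg.1 (fun a b => ⟪a, b⟫) 1
      (by simpa using hCS)
  have hfin : eLpNorm f (ENNReal.ofReal p) μ * eLpNorm g (ENNReal.ofReal q) μ < ⊤ :=
    ENNReal.mul_lt_top hf.2 hg.2
  have hint : Integrable (fun x => ⟪f x, g x⟫) μ :=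
    memLp_one_iff_integrable.mp ⟨hmeas, lt_of_le_of_lt hle hfin⟩
  refine ⟨hint, ?_⟩
  have h1 : ENNReal.ofReal ‖∫ x, ⟪f x, g x⟫ ∂μ‖ ≤
      eLpNorm (fun x => ⟪f x, g x⟫) 1 μ := by
    rw [eLpNorm_one_eq_lintegral_enorm]
    rw [ofReal_norm_eq_enorm]
    exact enorm_integral_le_lintegral_enorm (μ := μ) (fun x => ⟪f x, g x⟫)
  calc ‖∫ x, ⟪f x, g x⟫ ∂μ‖
      = (ENNReal.ofReal ‖∫ x, ⟪f x, g x⟫ ∂μ‖).toReal := by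
        rw [ENNReal.toReal_ofReal (norm_nonneg _)]
    _ ≤ (eLpNorm f (ENNReal.ofReal p) μ * eLpNorm g (ENNReal.ofReal q) μ).toReal :=
        ENNReal.toReal_mono hfin.ne (h1.trans hle)
    _ = _ := ENNReal.toReal_mul

/-- the `(p,q)`-orthogonality relation.  Let `1 < p < ∞` and
`q = p/(p−1)`.  If `α ∈ L^p_+(X)` and `β ∈ L^q_-(X)`, then `x ↦ ⟨α(x) | β(x)⟩` is
integrable on `X` and `∫_X ⟨α(x) | β(x)⟩ dx = 0`. -/
theorem pq_orthogonality
    (μ : Measure X) [SigmaFinite μ]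
    (K : Set (X → V)) (hK : IsClosedL2Subspace μ K)
    (p q : ℝ) (hp : 1 < p) (hq : q = p / (p - 1))
    (α β : X → V)
    (hα : α ∈ LsCl μ K p) (hβ : β ∈ LsCl μ (OrthCompl μ K) q) :
    Integrable (fun x => ⟪α x, β x⟫) μ ∧ ∫ x, ⟪α x, β x⟫ ∂μ = 0 := by
  have hpq : Real.HolderConjugate p q := (Real.holderConjugate_iff_eq_conjExponent hp).2 hq
  have hαp : MemLp α (ENNReal.ofReal p) μ := hα.1
  have hβq : MemLp β (ENNReal.ofReal q) μ := hβ.1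
  obtain ⟨hint, -⟩ := holder_inner hpq hαp hβq
  refine ⟨hint, ?_⟩
  set A : ℝ := (eLpNorm α (ENNReal.ofReal p) μ).toReal with hA
  set B : ℝ := (eLpNorm β (ENNReal.ofReal q) μ).toReal with hB
  have hA0 : 0 ≤ A := ENNReal.toReal_nonneg
  have hB0 : 0 ≤ B := ENNReal.toReal_nonneg
  set C : ℝ := A + B + 2 with hC
  have hC0 : 0 < C := by positivity
  set I : ℝ := ∫ x, ⟪α x, β x⟫ ∂μ with hI
  -- key estimate: for every 0 < ε ≤ 1, ‖I‖ ≤ ε * C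
  have key : ∀ ε : ℝ, 0 < ε → ε ≤ 1 → ‖I‖ ≤ ε * C := by
    intro ε hε hε1
    obtain ⟨a, haK, haLs, haε⟩ := hα.2 ε hε
    obtain ⟨b, hbO, hbLs, hbε⟩ := hβ.2 ε hε
    have haP : MemLp a (ENNReal.ofReal p) μ := haLs
    have hbQ : MemLp b (ENNReal.ofReal q) μ := hbLs
    have hαaP : MemLp (α - a) (ENNReal.ofReal p) μ := hαp.sub haP
    have hβbQ : MemLp (β - b) (ENNReal.ofReal q) μ := hβq.sub hbQ
    obtain ⟨hint1, hbd1⟩ := holder_inner hpq hαaP hβq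
    obtain ⟨hint2, hbd2⟩ := holder_inner hpq haP hβbQ
    obtain ⟨hint3, -⟩ := holder_inner hpq haP hbQ
    have hab : ∫ x, ⟪a x, b x⟫ ∂μ = 0 := hbO.2 a haK
    have hintaβ := (holder_inner hpq haP hβq).1
    have e1 : ∫ x, ⟪(α - a) x, β x⟫ ∂μ = I - ∫ x, ⟪a x, β x⟫ ∂μ := by
      rw [hI, ← integral_sub hint hintaβ]
      congr 1
      funext x
      simp [inner_sub_left]
    have e2 : ∫ x, ⟪a x, (β - b) x⟫ ∂μ = (∫ x, ⟪a x, β x⟫ ∂μ) - 0 := by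
      rw [← hab, ← integral_sub hintaβ hint3]
      congr 1
      funext x
      simp [inner_sub_right]
    have hsplit : I = (∫ x, ⟪(α - a) x, β x⟫ ∂μ) + ∫ x, ⟪a x, (β - b) x⟫ ∂μ := by
      rw [e1, e2]; ring
    -- eLpNorm bounds, converted to reals
    have h1 : (eLpNorm (α - a) (ENNReal.ofReal p) μ).toReal ≤ ε :=
      ENNReal.toReal_le_of_le_ofReal hε.le haε.le
    have h2 : (eLpNorm (β - b) (ENNReal.ofReal q) μ).toReal ≤ ε :=
      ENNReal.toReal_le_of_le_ofReal hε.le hbε.le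
    have hPone : (1 : ℝ≥0∞) ≤ ENNReal.ofReal p := by
      rw [← ENNReal.ofReal_one]
      exact ENNReal.ofReal_le_ofReal hpq.lt.le
    have ha_bd : (eLpNorm a (ENNReal.ofReal p) μ).toReal ≤ A + ε := by
      have htri : eLpNorm a (ENNReal.ofReal p) μ ≤
          eLpNorm α (ENNReal.ofReal p) μ + eLpNorm (α - a) (ENNReal.ofReal p) μ := by
        calc eLpNorm a (ENNReal.ofReal p) μ
            = eLpNorm (α - (α - a)) (ENNReal.ofReal p) μ := by rw [_root_.sub_sub_cancel]
          _ ≤ _ := eLpNorm_sub_le hαp.1 (hαp.1.sub haP.1) hPone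
      have hfin : eLpNorm α (ENNReal.ofReal p) μ + eLpNorm (α - a) (ENNReal.ofReal p) μ ≠ ⊤ :=
        (ENNReal.add_lt_top.2 ⟨hαp.2, hαaP.2⟩).ne
      calc (eLpNorm a (ENNReal.ofReal p) μ).toReal
          ≤ (eLpNorm α (ENNReal.ofReal p) μ + eLpNorm (α - a) (ENNReal.ofReal p) μ).toReal :=
            ENNReal.toReal_mono hfin htri
        _ = A + (eLpNorm (α - a) (ENNReal.ofReal p) μ).toReal := by
            rw [ENNReal.toReal_add hαp.2.ne hαaP.2.ne]
        _ ≤ A + ε := by linarith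
    calc ‖I‖ ≤ ‖(∫ x, ⟪(α - a) x, β x⟫ ∂μ)‖ + ‖(∫ x, ⟪a x, (β - b) x⟫ ∂μ)‖ := by
          rw [hsplit]
          exact norm_add_le _ _
      _ ≤ (eLpNorm (α - a) (ENNReal.ofReal p) μ).toReal * B
          + (eLpNorm a (ENNReal.ofReal p) μ).toReal
            * (eLpNorm (β - b) (ENNReal.ofReal q) μ).toReal := add_le_add hbd1 hbd2
      _ ≤ ε * B + (A + ε) * ε := by
          gcongr <;> first | exact ENNReal.toReal_nonneg | skip
      _ ≤ ε * C := by nlinarith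
  -- conclude I = 0
  by_contra hne
  have hIpos : 0 < ‖I‖ := norm_pos_iff.2 hne
  have hεpos : 0 < min 1 (‖I‖ / (2 * C)) := lt_min one_pos (by positivity)
  have hk := key _ hεpos (min_le_left _ _)
  have hεle : min 1 (‖I‖ / (2 * C)) ≤ ‖I‖ / (2 * C) := min_le_right _ _
  have hmul : min 1 (‖I‖ / (2 * C)) * C ≤ (‖I‖ / (2 * C)) * C := by nlinarith
  have hhalf : (‖I‖ / (2 * C)) * C = ‖I‖ / 2 := by field_simp
  linarith
end
end

section
/- Let 1 < p < ∞ with Hölder conjugate q, and let A : V → V satisfy the homogeneity, Lipschitz and monotonicity conditions of a p-structure with constants C_𝔄, c_𝔄. Then A is a bijection of V onto V, and its inverse B := A^{−1} satisfies the analogous conditions with q in place of p: B(λw) = λ^{q−1} B(w) for all λ ≥ 0, and there exist constants C'', c'' > 0 depending only on p, C_𝔄, c_𝔄 such that |B(w₁) − B(w₂)| ≤ C'' (|w₁|+|w₂|)^{q−2} |w₁ − w₂| and ⟨B(w₁) − B(w₂) | w₁ − w₂⟩ ≥ c'' (|w₁|+|w₂|)^{q−2} |w₁ − w₂|² for all w₁,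 w₂ ∈ V. -/
open scoped RealInnerProductSpace

section PStructureAux

open Filter Metric Set Topology

variable {V : Type*} [NormedAddCommGroup V] [InnerProductSpace ℝ V]
variable {p CA cA : ℝ} {A : V → V}

private lemma rpow_two_eq (x : ℝ) : x ^ (2:ℝ) = x * x := by
  rw [show (2:ℝ) = ((2:ℕ):ℝ) by norm_num, Real.rpow_natCast]; ring

private lemma rpow_sub_one_mul {x : ℝ} (hx : 0 ≤ x) {a : ℝ} (ha : a ≠ 0) :
    x ^ (a - 1) * x = x ^ a := by
  have h : a - 1 + 1 = a := by ring
  rw [← Real.rpow_add_one' hx (show a - 1 + 1 ≠ 0 by rw [h]; exact ha), h]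

private lemma rpow_sub_two_mul_sq {x : ℝ} (hx : 0 ≤ x) {a : ℝ} (ha : a ≠ 0) :
    x ^ (a - 2) * x ^ (2:ℝ) = x ^ a := by
  rw [← Real.rpow_add' hx (show a - 2 + 2 ≠ 0 by simpa using ha)]
  congr 1
  ring

private lemma min_le_rpow {L T U e : ℝ} (hL : 0 < L) (h1 : L ≤ T) (h2 : T ≤ U) :
    min (L ^ e) (U ^ e) ≤ T ^ e := by
  rcases le_or_gt 0 e with he | he
  · exact min_le_of_left_le (Real.rpow_le_rpow hL.le h1 he)
  · exact min_le_of_right_le (Real.rpow_le_rpow_of_nonpos (hL.trans_le h1) h2 he.le)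

private lemma rpow_le_max {L T U e : ℝ} (hL : 0 < L) (h1 : L ≤ T) (h2 : T ≤ U) :
    T ^ e ≤ max (L ^ e) (U ^ e) := by
  rcases le_or_gt 0 e with he | he
  · exact le_max_of_le_right (Real.rpow_le_rpow (hL.le.trans h1) h2 he)
  · exact le_max_of_le_left (Real.rpow_le_rpow_of_nonpos hL h1 he.le)

private lemma norm_add_pos_of_ne {v₁ v₂ : V} (h : v₁ ≠ v₂) : 0 < ‖v₁‖ + ‖v₂‖ := by
  rcases eq_or_ne v₁ 0 with rfl | hv
  · have h2 : v₂ ≠ 0 := fun h0 => h h0.symm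
    have := norm_pos_iff.mpr h2
    linarith [norm_nonneg (0 : V)]
  · have := norm_pos_iff.mpr hv
    linarith [norm_nonneg v₂]

private lemma A_zero (hp : 1 < p) (hA : IsPStructureMap p A CA cA) : A 0 = 0 := by
  have h := hA.homog 0 le_rfl 0
  rw [zero_smul, Real.zero_rpow (ne_of_gt (by linarith : (0:ℝ) < p - 1)), zero_smul] at h
  exact h

private lemma norm_A_le (hp : 1 < p) (hA : IsPStructureMap p A CA cA) (v : V) :
    ‖A v‖ ≤ CA * ‖v‖ ^ (p - 1) := by
  have h := hA.lipschitz v 0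
  rw [A_zero hp hA, sub_zero, sub_zero, norm_zero, add_zero] at h
  calc ‖A v‖ ≤ CA * (‖v‖ ^ (p - 2) * ‖v‖) := h
  _ = CA * ‖v‖ ^ (p - 1) := by
      rw [show p - 2 = (p - 1) - 1 by ring,
        rpow_sub_one_mul (norm_nonneg v) (ne_of_gt (by linarith : (0:ℝ) < p - 1))]

private lemma coercive (hp : 1 < p) (hA : IsPStructureMap p A CA cA) (v : V) :
    cA * ‖v‖ ^ p ≤ ⟪A v, v⟫ := by
  have h := hA.monotone v 0
  rw [A_zero hp hA, sub_zero, sub_zero, norm_zero, add_zero] at h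
  calc cA * ‖v‖ ^ p = cA * (‖v‖ ^ (p - 2) * ‖v‖ ^ (2:ℝ)) := by
        rw [rpow_sub_two_mul_sq (norm_nonneg v) (ne_of_gt (by linarith : (0:ℝ) < p))]
  _ ≤ ⟪A v, v⟫ := h

private lemma le_norm_A (hp : 1 < p) (hcA : 0 < cA) (hA : IsPStructureMap p A CA cA) (v : V) :
    cA * ‖v‖ ^ (p - 1) ≤ ‖A v‖ := by
  rcases eq_or_ne v 0 with rfl | hv
  · rw [norm_zero, Real.zero_rpow (ne_of_gt (by linarith : (0:ℝ) < p - 1)), mul_zero]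
    exact norm_nonneg _
  · have h1 := coercive hp hA v
    have h2 := real_inner_le_norm (A v) v
    have hv0 : 0 < ‖v‖ := norm_pos_iff.mpr hv
    have key : cA * ‖v‖ ^ (p - 1) * ‖v‖ ≤ ‖A v‖ * ‖v‖ := by
      rw [mul_assoc, rpow_sub_one_mul (norm_nonneg v) (ne_of_gt (by linarith : (0:ℝ) < p))]
      linarith
    exact le_of_mul_le_mul_right key hv0

private lemma A_inj (hp : 1 < p) (hcA : 0 < cA) (hA : IsPStructureMap p A CA cA) :
    Function.Injective A := by
  intro v₁ v₂ h
  by_contra hne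
  have hm := hA.monotone v₁ v₂
  rw [h, sub_self, inner_zero_left] at hm
  have h1 := norm_add_pos_of_ne hne
  have h2 : 0 < ‖v₁ - v₂‖ := by
    rw [norm_pos_iff]
    exact sub_ne_zero.mpr hne
  have h3 := Real.rpow_pos_of_pos h1 (p - 2)
  have h4 := Real.rpow_pos_of_pos h2 (2:ℝ)
  have h5 := mul_pos hcA (mul_pos h3 h4)
  linarith

private lemma A_cont (hp : 1 < p) (hCA : 0 < CA) (hA : IsPStructureMap p A CA cA) :
    Continuous A := by
  rw [continuous_iff_continuousAt]
  intro v₀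
  rcases eq_or_ne v₀ 0 with rfl | hv₀
  · have key : Tendsto A (𝓝 0) (𝓝 0) := by
      apply squeeze_zero_norm (fun v => norm_A_le hp hA v)
      have h1 : Tendsto (fun v : V => ‖v‖) (𝓝 0) (𝓝 0) := by
        simpa using continuous_norm.tendsto (0:V)
      have h2 : ContinuousAt (fun x : ℝ => x ^ (p - 1)) 0 :=
        Real.continuousAt_rpow_const 0 (p - 1) (Or.inr (by linarith))
      have h3 := h2.tendsto.comp h1
      rw [Real.zero_rpow (ne_of_gt (by linarith : (0:ℝ) < p - 1))] at h3
      have h4 := h3.const_mul CA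
      rw [mul_zero] at h4
      simpa [Function.comp] using h4
    rw [ContinuousAt, A_zero hp hA]
    exact key
  · have key : Tendsto (fun v => A v - A v₀) (𝓝 v₀) (𝓝 0) := by
      apply squeeze_zero_norm (fun v => hA.lipschitz v v₀)
      have hb : (0:ℝ) < ‖v₀‖ + ‖v₀‖ := by
        have := norm_pos_iff.mpr hv₀; linarith
      have h1 : ContinuousAt (fun v : V => CA * ((‖v‖ + ‖v₀‖) ^ (p - 2) * ‖v - v₀‖)) v₀ := by
        apply ContinuousAt.mul continuousAt_const
        apply ContinuousAt.mul
        · exact ContinuousAt.rpow_const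
            ((continuous_norm.add continuous_const).continuousAt) (Or.inl (ne_of_gt hb))
        · exact ((continuous_id.sub continuous_const).norm).continuousAt
      have h2 := h1.tendsto
      simp only [sub_self, norm_zero, mul_zero] at h2
      exact h2
    exact tendsto_sub_nhds_zero_iff.mp key

private lemma A_closedRange [FiniteDimensional ℝ V] (hp : 1 < p) (hCA : 0 < CA) (hcA : 0 < cA)
    (hA : IsPStructureMap p A CA cA) : IsClosed (Set.range A) := by
  rw [← isSeqClosed_iff_isClosed]
  intro u x hu hux
  choose v hv using hu
  have hbdd : BddAbove (Set.range fun n => ‖u n‖) := hux.norm.bddAbove_range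
  obtain ⟨M, hM⟩ := hbdd
  have hM' : ∀ n, ‖u n‖ ≤ M := fun n => hM ⟨n, rfl⟩
  have hvb : ∀ n, v n ∈ Metric.closedBall (0 : V) ((M / cA) ^ (p - 1)⁻¹) := by
    intro n
    rw [Metric.mem_closedBall, dist_zero_right]
    have h1 : cA * ‖v n‖ ^ (p - 1) ≤ M := by
      calc cA * ‖v n‖ ^ (p - 1) ≤ ‖A (v n)‖ := le_norm_A hp hcA hA (v n)
      _ = ‖u n‖ := by rw [hv n]
      _ ≤ M := hM' n
    have h2 : ‖v n‖ ^ (p - 1) ≤ M / cA := by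
      rw [le_div_iff₀ hcA]; nlinarith
    calc ‖v n‖ = (‖v n‖ ^ (p - 1)) ^ (p - 1)⁻¹ :=
          (Real.rpow_rpow_inv (norm_nonneg _) (ne_of_gt (by linarith : (0:ℝ) < p - 1))).symm
    _ ≤ (M / cA) ^ (p - 1)⁻¹ :=
          Real.rpow_le_rpow (Real.rpow_nonneg (norm_nonneg _) _) h2
            (inv_nonneg.mpr (by linarith))
  obtain ⟨a, -, φ, hφ, hva⟩ := tendsto_subseq_of_bounded Metric.isBounded_closedBall hvb
  refine ⟨a, ?_⟩
  have h1 : Tendsto (A ∘ (v ∘ φ)) atTop (𝓝 (A a)) :=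
    ((A_cont hp hCA hA).tendsto a).comp hva
  have h2 : Tendsto (u ∘ φ) atTop (𝓝 x) := hux.comp hφ.tendsto_atTop
  have h3 : A ∘ (v ∘ φ) = u ∘ φ := funext fun n => hv (φ n)
  rw [h3] at h1
  exact tendsto_nhds_unique h1 h2

set_option maxHeartbeats 1600000 in
private lemma A_openAt [FiniteDimensional ℝ V] (hp : 1 < p) (hCA : 0 < CA) (hcA : 0 < cA)
    (hA : IsPStructureMap p A CA cA) {v₀ : V} (hv₀ : v₀ ≠ 0) :
    ∃ ε > 0, Metric.ball (A v₀) ε ⊆ Set.range A := by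
  haveI : CompleteSpace V := FiniteDimensional.complete ℝ V
  have hn0 : 0 < ‖v₀‖ := norm_pos_iff.mpr hv₀
  set r : ℝ := ‖v₀‖ / 2 with hr_def
  have hr : 0 < r := by rw [hr_def]; positivity
  set m : ℝ := min (‖v₀‖ ^ (p - 2)) ((3 * ‖v₀‖) ^ (p - 2)) with hm_def
  set Mb : ℝ := max (‖v₀‖ ^ (p - 2)) ((3 * ‖v₀‖) ^ (p - 2)) with hMb_def
  have hm : 0 < m :=
    lt_min (Real.rpow_pos_of_pos hn0 _) (Real.rpow_pos_of_pos (by linarith) _)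
  have hmM : m ≤ Mb := min_le_max
  have hMb : 0 < Mb := lt_of_lt_of_le hm hmM
  have hTb : ∀ v₁ v₂ : V, v₁ ∈ Metric.closedBall v₀ r → v₂ ∈ Metric.closedBall v₀ r →
      m ≤ (‖v₁‖ + ‖v₂‖) ^ (p - 2) ∧ (‖v₁‖ + ‖v₂‖) ^ (p - 2) ≤ Mb := by
    intro v₁ v₂ h₁ h₂
    rw [Metric.mem_closedBall, dist_eq_norm] at h₁ h₂
    have e₁ := abs_norm_sub_norm_le v₁ v₀
    have e₂ := abs_norm_sub_norm_le v₂ v₀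
    rw [abs_le] at e₁ e₂
    have hL : ‖v₀‖ ≤ ‖v₁‖ + ‖v₂‖ := by
      have := e₁.1; have := e₂.1; rw [hr_def] at h₁ h₂; linarith
    have hU : ‖v₁‖ + ‖v₂‖ ≤ 3 * ‖v₀‖ := by
      have := e₁.2; have := e₂.2; rw [hr_def] at h₁ h₂; linarith
    exact ⟨min_le_rpow hn0 hL hU, rpow_le_max hn0 hL hU⟩
  have hcaCA : cA ≤ CA := by
    have h1 := hA.monotone v₀ 0
    have h2 := hA.lipschitz v₀ 0
    have h3 := real_inner_le_norm (A v₀ - A 0) (v₀ - 0)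
    simp only [sub_zero, norm_zero, add_zero] at h1 h2 h3
    rw [rpow_two_eq] at h1
    have hx := Real.rpow_pos_of_pos hn0 (p - 2)
    have h4 : ‖A v₀ - A 0‖ * ‖v₀‖ ≤ CA * ((‖v₀‖) ^ (p - 2) * ‖v₀‖) * ‖v₀‖ :=
      mul_le_mul_of_nonneg_right h2 (norm_nonneg v₀)
    by_contra hlt
    push_neg at hlt
    nlinarith [mul_pos hx (mul_pos hn0 hn0)]
  have hccLL : cA * m ≤ CA * Mb := mul_le_mul hcaCA hmM hm.le hCA.le
  set t : ℝ := (cA * m) / ((CA * Mb) * (CA * Mb)) with ht_def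
  have ht : 0 < t := by rw [ht_def]; positivity
  have hTLL : t * ((CA * Mb) * (CA * Mb)) = cA * m := by
    rw [ht_def]; field_simp
  have htc : t * (cA * m) ≤ 1 := by
    rw [ht_def, div_mul_eq_mul_div, div_le_one (by positivity)]
    exact mul_le_mul hccLL hccLL (by positivity) (by positivity)
  have h1tc : 0 ≤ 1 - t * (cA * m) := by linarith
  have htcpos : 0 < t * (cA * m) := by positivity
  set k : ℝ := Real.sqrt (1 - t * (cA * m)) with hk_def
  have hk0 : 0 ≤ k := Real.sqrt_nonneg _
  have hksq : k ^ 2 = 1 - t * (cA * m) := Real.sq_sqrt h1tc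
  have hk1 : k < 1 := by nlinarith
  refine ⟨(1 - k) * r / t, div_pos (mul_pos (by linarith) hr) ht, ?_⟩
  intro w hw
  rw [Metric.mem_ball, dist_eq_norm] at hw
  set F : V → V := fun v => v - t • (A v - w) with hF_def
  have hcontr : ∀ v₁ v₂ : V, v₁ ∈ Metric.closedBall v₀ r → v₂ ∈ Metric.closedBall v₀ r →
      ‖F v₁ - F v₂‖ ≤ k * ‖v₁ - v₂‖ := by
    intro v₁ v₂ h₁ h₂
    obtain ⟨hlo, hhi⟩ := hTb v₁ v₂ h₁ h₂
    have hFdiff : F v₁ - F v₂ = (v₁ - v₂) - t • (A v₁ - A v₂) := by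
      simp only [hF_def, smul_sub]; abel
    have hmono := hA.monotone v₁ v₂
    have hlip := hA.lipschitz v₁ v₂
    rw [rpow_two_eq] at hmono
    set x := v₁ - v₂ with hx_def
    set y := A v₁ - A v₂ with hy_def
    have hx0 : (0:ℝ) ≤ ‖x‖ := norm_nonneg x
    have hy0 : (0:ℝ) ≤ ‖y‖ := norm_nonneg y
    have hmono' : (cA * m) * (‖x‖ * ‖x‖) ≤ ⟪y, x⟫ := by
      have hstep : (cA * m) * (‖x‖ * ‖x‖) ≤ cA * ((‖v₁‖ + ‖v₂‖) ^ (p - 2) * (‖x‖ * ‖x‖)) := by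
        linarith [mul_le_mul_of_nonneg_left
          (mul_le_mul_of_nonneg_right hlo (mul_nonneg hx0 hx0)) hcA.le]
      exact le_trans hstep hmono
    have hlip' : ‖y‖ ≤ (CA * Mb) * ‖x‖ := by
      calc ‖y‖ ≤ CA * ((‖v₁‖ + ‖v₂‖) ^ (p - 2) * ‖x‖) := hlip
      _ ≤ (CA * Mb) * ‖x‖ := by
          linarith [mul_le_mul_of_nonneg_left (mul_le_mul_of_nonneg_right hhi hx0) hCA.le]
    have hsq : ‖x - t • y‖ ^ 2 = ‖x‖ ^ 2 - 2 * (t * ⟪y, x⟫) + t ^ 2 * ‖y‖ ^ 2 := by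
      rw [norm_sub_sq_real, real_inner_smul_right, norm_smul, Real.norm_eq_abs,
        abs_of_pos ht, real_inner_comm]
      ring
    have e2' : t ^ 2 * ‖y‖ ^ 2 ≤ t * (cA * m) * ‖x‖ ^ 2 := by
      have h5 : ‖y‖ * ‖y‖ ≤ ((CA * Mb) * ‖x‖) * ((CA * Mb) * ‖x‖) :=
        mul_self_le_mul_self hy0 hlip'
      calc t ^ 2 * ‖y‖ ^ 2 = t * t * (‖y‖ * ‖y‖) := by ring
      _ ≤ t * t * (((CA * Mb) * ‖x‖) * ((CA * Mb) * ‖x‖)) := by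
          have := mul_le_mul_of_nonneg_left h5 (mul_nonneg ht.le ht.le)
          linarith
      _ = t * (t * ((CA * Mb) * (CA * Mb))) * (‖x‖ ^ 2) := by ring
      _ = t * (cA * m) * ‖x‖ ^ 2 := by rw [hTLL]
    have e1' : 2 * (t * ((cA * m) * (‖x‖ * ‖x‖))) ≤ 2 * (t * ⟪y, x⟫) := by
      have := mul_le_mul_of_nonneg_left hmono' ht.le
      linarith
    have key2 : ‖x - t • y‖ ^ 2 ≤ (1 - t * (cA * m)) * ‖x‖ ^ 2 := by nlinarith
    have hfin : ‖x - t • y‖ ≤ k * ‖x‖ := by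
      nlinarith [norm_nonneg (x - t • y), mul_nonneg hk0 hx0]
    rw [hFdiff]
    exact hfin
  have hmaps : Set.MapsTo F (Metric.closedBall v₀ r) (Metric.closedBall v₀ r) := by
    intro v hv
    have h1 : ‖F v - F v₀‖ ≤ k * ‖v - v₀‖ := hcontr v v₀ hv (Metric.mem_closedBall_self hr.le)
    have h2 : F v₀ - v₀ = t • (w - A v₀) := by
      simp only [hF_def, smul_sub]; abel
    have h3 : ‖F v₀ - v₀‖ ≤ t * ((1 - k) * r / t) := by
      rw [h2, norm_smul, Real.norm_eq_abs, abs_of_pos ht]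
      exact mul_le_mul_of_nonneg_left hw.le ht.le
    have h5 : t * ((1 - k) * r / t) = (1 - k) * r := by field_simp
    rw [h5] at h3
    have h4 : ‖v - v₀‖ ≤ r := by
      rw [Metric.mem_closedBall, dist_eq_norm] at hv; exact hv
    rw [Metric.mem_closedBall, dist_eq_norm]
    have h6 : k * ‖v - v₀‖ ≤ k * r := mul_le_mul_of_nonneg_left h4 hk0
    calc ‖F v - v₀‖ = ‖(F v - F v₀) + (F v₀ - v₀)‖ := by rw [sub_add_sub_cancel]
    _ ≤ ‖F v - F v₀‖ + ‖F v₀ - v₀‖ := norm_add_le _ _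
    _ ≤ k * r + (1 - k) * r := by linarith
    _ = r := by ring
  set K : NNReal := Real.toNNReal k with hK_def
  have hKk : (K : ℝ) = k := Real.coe_toNNReal k hk0
  have hK1 : K < 1 := by
    rw [← NNReal.coe_lt_coe, hKk, NNReal.coe_one]; exact hk1
  have hlipF : LipschitzWith K (hmaps.restrict F _ _) := by
    apply LipschitzWith.of_dist_le_mul
    rintro ⟨a, ha⟩ ⟨b, hb⟩
    simp only [Subtype.dist_eq, Set.MapsTo.val_restrict_apply]
    rw [dist_eq_norm, dist_eq_norm, hKk]
    exact hcontr a b ha hb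
  have hcomplete : IsComplete (Metric.closedBall v₀ r) :=
    Metric.isClosed_closedBall.isComplete
  obtain ⟨y, hy_mem, hy_fix, -, -⟩ :=
    ContractingWith.exists_fixedPoint' hcomplete hmaps ⟨hK1, hlipF⟩
      (Metric.mem_closedBall_self hr.le) (edist_ne_top _ _)
  refine ⟨y, ?_⟩
  have h7 : t • (A y - w) = 0 := by
    have h := hy_fix
    simp only [Function.IsFixedPt, hF_def] at h
    exact sub_eq_self.mp h
  have h8 : A y - w = 0 := by
    rcases smul_eq_zero.mp h7 with h | h
    · exact absurd h (ne_of_gt ht)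
    · exact h
  exact sub_eq_zero.mp h8

set_option maxHeartbeats 1600000 in
private lemma A_surj [FiniteDimensional ℝ V] (hp : 1 < p) (hCA : 0 < CA) (hcA : 0 < cA)
    (hA : IsPStructureMap p A CA cA) : Function.Surjective A := by
  intro w₀
  rcases eq_or_ne w₀ 0 with rfl | hw₀
  · exact ⟨0, A_zero hp hA⟩
  by_contra hns
  push_neg at hns
  have hw₀R : w₀ ∉ Set.range A := by rintro ⟨v, hv⟩; exact hns v hv
  have hw₀n : 0 < ‖w₀‖ := norm_pos_iff.mpr hw₀
  have hHconv : Convex ℝ {w : V | 0 < ⟪w, w₀⟫} :=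
    convex_halfSpace_gt ⟨fun x y => inner_add_left x y w₀, fun c x => by
      simp [real_inner_smul_left, smul_eq_mul]⟩ 0
  have hUopen : IsOpen (Set.range A \ {(0:V)}) := by
    rw [Metric.isOpen_iff]
    rintro w ⟨⟨v, rfl⟩, hw0⟩
    rw [Set.mem_singleton_iff] at hw0
    have hv0 : v ≠ 0 := by rintro rfl; exact hw0 (A_zero hp hA)
    have hAv : 0 < ‖A v‖ := norm_pos_iff.mpr hw0
    obtain ⟨ε, hε, hball⟩ := A_openAt hp hCA hcA hA hv0
    refine ⟨min ε ‖A v‖, lt_min hε hAv, ?_⟩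
    intro z hz
    rw [Metric.mem_ball] at hz
    refine ⟨hball (Metric.mem_ball.mpr (lt_of_lt_of_le hz (min_le_left _ _))), ?_⟩
    rw [Set.mem_singleton_iff]
    rintro rfl
    rw [dist_zero_left] at hz
    exact absurd (lt_of_lt_of_le hz (min_le_right _ _)) (lt_irrefl _)
  have hclosed := A_closedRange hp hCA hcA hA
  have hsub : {w : V | 0 < ⟪w, w₀⟫} ⊆ (Set.range A \ {0}) ∪ (Set.range A)ᶜ := by
    intro w hw
    by_cases hwR : w ∈ Set.range A
    · left
      refine ⟨hwR, ?_⟩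
      rw [Set.mem_singleton_iff]
      rintro rfl
      rw [Set.mem_setOf_eq, inner_zero_left] at hw
      exact lt_irrefl 0 hw
    · right; exact hwR
  have hne1 : ({w : V | 0 < ⟪w, w₀⟫} ∩ (Set.range A \ {0})).Nonempty := by
    refine ⟨A w₀, ?_, Set.mem_range_self w₀, ?_⟩
    · rw [Set.mem_setOf_eq]
      have h1 := coercive hp hA w₀
      have h2 : 0 < cA * ‖w₀‖ ^ p := by positivity
      exact lt_of_lt_of_le h2 h1
    · rw [Set.mem_singleton_iff]
      intro h0
      have h1 := le_norm_A hp hcA hA w₀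
      rw [h0, norm_zero] at h1
      have h2 : 0 < cA * ‖w₀‖ ^ (p - 1) := by positivity
      linarith
  have hne2 : ({w : V | 0 < ⟪w, w₀⟫} ∩ (Set.range A)ᶜ).Nonempty := by
    refine ⟨w₀, ?_, hw₀R⟩
    rw [Set.mem_setOf_eq, real_inner_self_eq_norm_sq]
    exact pow_pos hw₀n 2
  obtain ⟨z, hzH, hz1, hz2⟩ :=
    hHconv.isPreconnected _ _ hUopen hclosed.isOpen_compl hsub hne1 hne2
  exact hz2 hz1.1

end PStructureAux

set_option maxHeartbeats 1600000 in
/-- If `A : V → V` satisfies the conditions of a `p`-structure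
(`1 < p < ∞`, conjugate `q`), then `A` is a bijection of `V` onto `V`, and any (two-sided)
inverse `B` of `A` satisfies the analogous conditions with `q` in place of `p`:
`B(λw) = λ^{q−1}B(w)` for `λ ≥ 0`, and with constants `C'', c'' > 0` depending only on
`p, CA, cA`, the `q`-Lipschitz and `q`-monotonicity inequalities hold. -/
theorem p_structure_inverse_is_q_structure
    {V : Type*} [NormedAddCommGroup V] [InnerProductSpace ℝ V] [FiniteDimensional ℝ V]
    (p q : ℝ) (hp : 1 < p) (hpq : 1 / p + 1 / q = 1)
    (CA cA : ℝ) (hCA : 0 < CA) (hcA : 0 < cA) :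
    ∃ C'' c'' : ℝ, 0 < C'' ∧ 0 < c'' ∧
      ∀ A : V → V, IsPStructureMap p A CA cA →
        Function.Bijective A ∧
        ∀ B : V → V, Function.LeftInverse B A → Function.RightInverse B A →
          IsPStructureMap q B C'' c'' := by
  have hp0 : (0:ℝ) < p := by linarith
  have h1p : 1 / p < 1 := by rw [div_lt_one hp0]; exact hp
  have h1q : 0 < 1 / q := by linarith
  have hq0 : 0 < q := by
    rcases lt_trichotomy q 0 with h | h | h
    · exfalso
      have : 1 / q < 0 := one_div_neg.mpr h
      linarith
    · exfalso; rw [h] at h1q; simp at h1q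
    · exact h
  have hpq1 : (p - 1) * (q - 1) = 1 := by
    field_simp at hpq
    linear_combination -hpq
  have hq1 : 1 < q := by
    by_contra h
    push_neg at h
    nlinarith
  have hq2' : (q - 1) * (2 - p) = q - 2 := by linear_combination -hpq1
  obtain ⟨k₁, hk₁def⟩ : ∃ k₁ : ℝ, k₁ = (2 * CA) ^ (-(q - 1)) := ⟨_, rfl⟩
  obtain ⟨k₂, hk₂def⟩ : ∃ k₂ : ℝ, k₂ = 2 * cA ^ (-(q - 1)) := ⟨_, rfl⟩
  have hk₁ : 0 < k₁ := by rw [hk₁def]; positivity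
  have hk₂ : 0 < k₂ := by rw [hk₂def]; positivity
  obtain ⟨Mn, hMndef⟩ : ∃ Mn : ℝ, Mn = min (k₁ ^ (2 - p)) (k₂ ^ (2 - p)) := ⟨_, rfl⟩
  obtain ⟨Mx, hMxdef⟩ : ∃ Mx : ℝ, Mx = max (k₁ ^ (2 - p)) (k₂ ^ (2 - p)) := ⟨_, rfl⟩
  have hMn : 0 < Mn := by
    rw [hMndef]
    exact lt_min (Real.rpow_pos_of_pos hk₁ _) (Real.rpow_pos_of_pos hk₂ _)
  have hMx : 0 < Mx := by
    rw [hMxdef]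
    exact lt_of_lt_of_le (Real.rpow_pos_of_pos hk₁ _) (le_max_left _ _)
  refine ⟨Mx / cA, cA / CA ^ 2 * Mn, by positivity, by positivity, ?_⟩
  intro A hA
  have hinj := A_inj hp hcA hA
  have hsurj := A_surj hp hCA hcA hA
  refine ⟨⟨hinj, hsurj⟩, ?_⟩
  intro B hBL hBR
  -- elementwise norm comparison
  have bound_v : ∀ v : V, cA ^ (q - 1) * ‖v‖ ≤ ‖A v‖ ^ (q - 1) ∧
      ‖A v‖ ^ (q - 1) ≤ CA ^ (q - 1) * ‖v‖ := by
    intro v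
    have h1 := le_norm_A hp hcA hA v
    have h2 := norm_A_le hp hA v
    have hrw : ∀ c : ℝ, 0 < c → (c * ‖v‖ ^ (p - 1)) ^ (q - 1) = c ^ (q - 1) * ‖v‖ := by
      intro c hc
      rw [Real.mul_rpow hc.le (Real.rpow_nonneg (norm_nonneg v) _),
        ← Real.rpow_mul (norm_nonneg v), hpq1, Real.rpow_one]
    constructor
    · have h3 : (cA * ‖v‖ ^ (p - 1)) ^ (q - 1) ≤ ‖A v‖ ^ (q - 1) :=
        Real.rpow_le_rpow (by positivity) h1 (by linarith)
      rwa [hrw cA hcA] at h3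
    · have h3 : ‖A v‖ ^ (q - 1) ≤ (CA * ‖v‖ ^ (p - 1)) ^ (q - 1) :=
        Real.rpow_le_rpow (norm_nonneg _) h2 (by linarith)
      rwa [hrw CA hCA] at h3
  -- bounds for the sum of norms
  have pair_bounds : ∀ v₁ v₂ : V, v₁ ≠ v₂ →
      k₁ * (‖A v₁‖ + ‖A v₂‖) ^ (q - 1) ≤ ‖v₁‖ + ‖v₂‖ ∧
      ‖v₁‖ + ‖v₂‖ ≤ k₂ * (‖A v₁‖ + ‖A v₂‖) ^ (q - 1) := by
    intro v₁ v₂ hne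
    obtain ⟨h1l, h1u⟩ := bound_v v₁
    obtain ⟨h2l, h2u⟩ := bound_v v₂
    have hw1 : (0:ℝ) ≤ ‖A v₁‖ := norm_nonneg _
    have hw2 : (0:ℝ) ≤ ‖A v₂‖ := norm_nonneg _
    have hS0 : (0:ℝ) ≤ ‖A v₁‖ + ‖A v₂‖ := by linarith
    have e1 : ‖A v₁‖ ^ (q - 1) ≤ (‖A v₁‖ + ‖A v₂‖) ^ (q - 1) :=
      Real.rpow_le_rpow hw1 (by linarith) (by linarith)
    have e2 : ‖A v₂‖ ^ (q - 1) ≤ (‖A v₁‖ + ‖A v₂‖) ^ (q - 1) :=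
      Real.rpow_le_rpow hw2 (by linarith) (by linarith)
    constructor
    · -- lower bound
      have c1 : ‖A v₁‖ ^ (q - 1) + ‖A v₂‖ ^ (q - 1) ≤ CA ^ (q - 1) * (‖v₁‖ + ‖v₂‖) := by
        rw [mul_add]; exact add_le_add h1u h2u
      have c2 : (‖A v₁‖ + ‖A v₂‖) ^ (q - 1) ≤
          2 ^ (q - 1) * (‖A v₁‖ ^ (q - 1) + ‖A v₂‖ ^ (q - 1)) := by
        have h2q : (0:ℝ) ≤ 2 ^ (q - 1) := Real.rpow_nonneg (by norm_num) _
        rcases le_total ‖A v₁‖ ‖A v₂‖ with hc | hc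
        · have hS2 : ‖A v₁‖ + ‖A v₂‖ ≤ 2 * ‖A v₂‖ := by linarith
          have h9 : 0 ≤ ‖A v₁‖ ^ (q - 1) := Real.rpow_nonneg hw1 _
          calc (‖A v₁‖ + ‖A v₂‖) ^ (q - 1) ≤ (2 * ‖A v₂‖) ^ (q - 1) :=
                Real.rpow_le_rpow hS0 hS2 (by linarith)
          _ = 2 ^ (q - 1) * ‖A v₂‖ ^ (q - 1) := Real.mul_rpow (by norm_num) hw2
          _ ≤ 2 ^ (q - 1) * (‖A v₁‖ ^ (q - 1) + ‖A v₂‖ ^ (q - 1)) := by nlinarith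
        · have hS2 : ‖A v₁‖ + ‖A v₂‖ ≤ 2 * ‖A v₁‖ := by linarith
          have h9 : 0 ≤ ‖A v₂‖ ^ (q - 1) := Real.rpow_nonneg hw2 _
          calc (‖A v₁‖ + ‖A v₂‖) ^ (q - 1) ≤ (2 * ‖A v₁‖) ^ (q - 1) :=
                Real.rpow_le_rpow hS0 hS2 (by linarith)
          _ = 2 ^ (q - 1) * ‖A v₁‖ ^ (q - 1) := Real.mul_rpow (by norm_num) hw1
          _ ≤ 2 ^ (q - 1) * (‖A v₁‖ ^ (q - 1) + ‖A v₂‖ ^ (q - 1)) := by nlinarith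
      have hCA2 : 0 < (2 * CA) ^ (q - 1) := Real.rpow_pos_of_pos (by linarith) _
      have h2q : (0:ℝ) < 2 ^ (q - 1) := Real.rpow_pos_of_pos (by norm_num) _
      have c3 : (‖A v₁‖ + ‖A v₂‖) ^ (q - 1) ≤ (2 * CA) ^ (q - 1) * (‖v₁‖ + ‖v₂‖) := by
        calc (‖A v₁‖ + ‖A v₂‖) ^ (q - 1) ≤
            2 ^ (q - 1) * (CA ^ (q - 1) * (‖v₁‖ + ‖v₂‖)) := by nlinarith
        _ = (2 * CA) ^ (q - 1) * (‖v₁‖ + ‖v₂‖) := by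
            rw [Real.mul_rpow (by norm_num : (0:ℝ) ≤ 2) hCA.le]; ring
      rw [hk₁def, Real.rpow_neg (by linarith : (0:ℝ) ≤ 2 * CA)]
      rw [inv_mul_le_iff₀ hCA2]
      exact c3
    · -- upper bound
      have c1 : cA ^ (q - 1) * (‖v₁‖ + ‖v₂‖) ≤ ‖A v₁‖ ^ (q - 1) + ‖A v₂‖ ^ (q - 1) := by
        rw [mul_add]; exact add_le_add h1l h2l
      have c2 : ‖A v₁‖ ^ (q - 1) + ‖A v₂‖ ^ (q - 1) ≤ 2 * (‖A v₁‖ + ‖A v₂‖) ^ (q - 1) := by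
        linarith
      have hca : 0 < cA ^ (q - 1) := Real.rpow_pos_of_pos hcA _
      have c3 : ‖v₁‖ + ‖v₂‖ ≤ 2 * (‖A v₁‖ + ‖A v₂‖) ^ (q - 1) / cA ^ (q - 1) := by
        rw [le_div_iff₀ hca]; nlinarith
      calc ‖v₁‖ + ‖v₂‖ ≤ 2 * (‖A v₁‖ + ‖A v₂‖) ^ (q - 1) / cA ^ (q - 1) := c3
      _ = k₂ * (‖A v₁‖ + ‖A v₂‖) ^ (q - 1) := by
          rw [hk₂def, Real.rpow_neg hcA.le]; ring
  -- rpow bounds with exponent 2 - p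
  have T_exp_bounds : ∀ v₁ v₂ : V, v₁ ≠ v₂ →
      Mn * (‖A v₁‖ + ‖A v₂‖) ^ (q - 2) ≤ (‖v₁‖ + ‖v₂‖) ^ (2 - p) ∧
      (‖v₁‖ + ‖v₂‖) ^ (2 - p) ≤ Mx * (‖A v₁‖ + ‖A v₂‖) ^ (q - 2) := by
    intro v₁ v₂ hne
    obtain ⟨hlow, hup⟩ := pair_bounds v₁ v₂ hne
    have hAne : A v₁ ≠ A v₂ := fun h => hne (hinj h)
    have hS0 : 0 < ‖A v₁‖ + ‖A v₂‖ := norm_add_pos_of_ne hAne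
    have hL0 : 0 < k₁ * (‖A v₁‖ + ‖A v₂‖) ^ (q - 1) := by
      have := Real.rpow_pos_of_pos hS0 (q - 1); positivity
    have rw1 : ∀ kk : ℝ, 0 < kk → (kk * (‖A v₁‖ + ‖A v₂‖) ^ (q - 1)) ^ (2 - p) =
        kk ^ (2 - p) * (‖A v₁‖ + ‖A v₂‖) ^ (q - 2) := by
      intro kk hkk
      rw [Real.mul_rpow hkk.le (Real.rpow_nonneg hS0.le _),
        ← Real.rpow_mul hS0.le, hq2']
    have hSq2 : (0:ℝ) ≤ (‖A v₁‖ + ‖A v₂‖) ^ (q - 2) := Real.rpow_nonneg hS0.le _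
    constructor
    · have h := min_le_rpow (e := 2 - p) hL0 hlow hup
      rwa [rw1 k₁ hk₁, rw1 k₂ hk₂, ← min_mul_of_nonneg _ _ hSq2, ← hMndef] at h
    · have h := rpow_le_max (e := 2 - p) hL0 hlow hup
      rwa [rw1 k₁ hk₁, rw1 k₂ hk₂, ← max_mul_of_nonneg _ _ hSq2, ← hMxdef] at h
  refine ⟨?_, ?_, ?_⟩
  · -- homogeneity
    intro l hl w
    have h2 : (l ^ (q - 1)) ^ (p - 1) = l := by
      rw [← Real.rpow_mul hl, show (q - 1) * (p - 1) = 1 by rw [mul_comm]; exact hpq1,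
        Real.rpow_one]
    have h1 : A (l ^ (q - 1) • B w) = l • w := by
      rw [hA.homog (l ^ (q - 1)) (Real.rpow_nonneg hl _) (B w), hBR w, h2]
    calc B (l • w) = B (A (l ^ (q - 1) • B w)) := by rw [h1]
    _ = l ^ (q - 1) • B w := hBL _
  · -- Lipschitz
    intro w₁ w₂
    rcases eq_or_ne w₁ w₂ with rfl | hne
    · simp
    · have hw₁ : A (B w₁) = w₁ := hBR w₁
      have hw₂ : A (B w₂) = w₂ := hBR w₂
      set v₁ := B w₁ with hv₁
      set v₂ := B w₂ with hv₂
      have hvne : v₁ ≠ v₂ := fun h => hne (by rw [← hw₁, ← hw₂, h])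
      obtain ⟨-, hTup⟩ := T_exp_bounds v₁ v₂ hvne
      rw [hw₁, hw₂] at hTup
      have hmono := hA.monotone v₁ v₂
      have hcs := real_inner_le_norm (A v₁ - A v₂) (v₁ - v₂)
      rw [hw₁, hw₂] at hmono hcs
      have hd0 : 0 < ‖v₁ - v₂‖ := by
        rw [norm_pos_iff]; exact sub_ne_zero.mpr hvne
      have hT0 : 0 < ‖v₁‖ + ‖v₂‖ := norm_add_pos_of_ne hvne
      have hD0 : (0:ℝ) ≤ ‖w₁ - w₂‖ := norm_nonneg _
      rw [rpow_two_eq] at hmono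
      have step1 : cA * ((‖v₁‖ + ‖v₂‖) ^ (p - 2) * ‖v₁ - v₂‖) ≤ ‖w₁ - w₂‖ := by
        apply le_of_mul_le_mul_right _ hd0
        calc cA * ((‖v₁‖ + ‖v₂‖) ^ (p - 2) * ‖v₁ - v₂‖) * ‖v₁ - v₂‖
            = cA * ((‖v₁‖ + ‖v₂‖) ^ (p - 2) * (‖v₁ - v₂‖ * ‖v₁ - v₂‖)) := by ring
        _ ≤ ⟪w₁ - w₂, v₁ - v₂⟫ := hmono
        _ ≤ ‖w₁ - w₂‖ * ‖v₁ - v₂‖ := hcs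
      have hTinv : (‖v₁‖ + ‖v₂‖) ^ (p - 2) * (‖v₁‖ + ‖v₂‖) ^ (2 - p) = 1 := by
        rw [← Real.rpow_add hT0]
        norm_num
      have step2 : ‖v₁ - v₂‖ ≤ ‖w₁ - w₂‖ / cA * (‖v₁‖ + ‖v₂‖) ^ (2 - p) := by
        have h6 : ‖v₁ - v₂‖ * (‖v₁‖ + ‖v₂‖) ^ (p - 2) ≤ ‖w₁ - w₂‖ / cA := by
          rw [le_div_iff₀ hcA]
          calc ‖v₁ - v₂‖ * (‖v₁‖ + ‖v₂‖) ^ (p - 2) * cA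
              = cA * ((‖v₁‖ + ‖v₂‖) ^ (p - 2) * ‖v₁ - v₂‖) := by ring
          _ ≤ ‖w₁ - w₂‖ := step1
        calc ‖v₁ - v₂‖ = ‖v₁ - v₂‖ * ((‖v₁‖ + ‖v₂‖) ^ (p - 2) * (‖v₁‖ + ‖v₂‖) ^ (2 - p)) := by
              rw [hTinv, mul_one]
        _ = (‖v₁ - v₂‖ * (‖v₁‖ + ‖v₂‖) ^ (p - 2)) * (‖v₁‖ + ‖v₂‖) ^ (2 - p) := by ring
        _ ≤ ‖w₁ - w₂‖ / cA * (‖v₁‖ + ‖v₂‖) ^ (2 - p) :=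
              mul_le_mul_of_nonneg_right h6 (Real.rpow_nonneg hT0.le _)
      have step3 : ‖w₁ - w₂‖ / cA * (‖v₁‖ + ‖v₂‖) ^ (2 - p) ≤
          ‖w₁ - w₂‖ / cA * (Mx * (‖w₁‖ + ‖w₂‖) ^ (q - 2)) :=
        mul_le_mul_of_nonneg_left hTup (by positivity)
      have heq : ‖w₁ - w₂‖ / cA * (Mx * (‖w₁‖ + ‖w₂‖) ^ (q - 2)) =
          Mx / cA * ((‖w₁‖ + ‖w₂‖) ^ (q - 2) * ‖w₁ - w₂‖) := by ring
      linarith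
  · -- monotonicity
    intro w₁ w₂
    rcases eq_or_ne w₁ w₂ with rfl | hne
    · simp only [sub_self, norm_zero, inner_zero_right]
      rw [Real.zero_rpow (by norm_num : (2:ℝ) ≠ 0)]
      simp
    · have hw₁ : A (B w₁) = w₁ := hBR w₁
      have hw₂ : A (B w₂) = w₂ := hBR w₂
      set v₁ := B w₁ with hv₁
      set v₂ := B w₂ with hv₂
      have hvne : v₁ ≠ v₂ := fun h => hne (by rw [← hw₁, ← hw₂, h])
      obtain ⟨hTlow, -⟩ := T_exp_bounds v₁ v₂ hvne
      rw [hw₁, hw₂] at hTlow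
      have hmono := hA.monotone v₁ v₂
      have hlip := hA.lipschitz v₁ v₂
      rw [hw₁, hw₂] at hmono hlip
      rw [real_inner_comm] at hmono
      have hd0 : (0:ℝ) ≤ ‖v₁ - v₂‖ := norm_nonneg _
      have hT0 : 0 < ‖v₁‖ + ‖v₂‖ := norm_add_pos_of_ne hvne
      have hD0 : (0:ℝ) ≤ ‖w₁ - w₂‖ := norm_nonneg _
      have hTp2 : 0 < (‖v₁‖ + ‖v₂‖) ^ (p - 2) := Real.rpow_pos_of_pos hT0 _
      have hTinv : (‖v₁‖ + ‖v₂‖) ^ (2 - p) * (‖v₁‖ + ‖v₂‖) ^ (p - 2) = 1 := by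
        rw [← Real.rpow_add hT0]
        norm_num
      rw [rpow_two_eq] at hmono
      rw [rpow_two_eq]
      have hSq2 : (0:ℝ) ≤ (‖w₁‖ + ‖w₂‖) ^ (q - 2) := Real.rpow_nonneg (by positivity) _
      calc cA / CA ^ 2 * Mn * ((‖w₁‖ + ‖w₂‖) ^ (q - 2) * (‖w₁ - w₂‖ * ‖w₁ - w₂‖))
          ≤ cA / CA ^ 2 * Mn * ((‖w₁‖ + ‖w₂‖) ^ (q - 2) *
            ((CA * ((‖v₁‖ + ‖v₂‖) ^ (p - 2) * ‖v₁ - v₂‖)) *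
             (CA * ((‖v₁‖ + ‖v₂‖) ^ (p - 2) * ‖v₁ - v₂‖)))) := by
            apply mul_le_mul_of_nonneg_left _ (by positivity)
            apply mul_le_mul_of_nonneg_left _ hSq2
            exact mul_le_mul hlip hlip hD0 (by positivity)
      _ = cA * ((Mn * (‖w₁‖ + ‖w₂‖) ^ (q - 2)) * (‖v₁‖ + ‖v₂‖) ^ (p - 2)) *
            ((‖v₁‖ + ‖v₂‖) ^ (p - 2) * (‖v₁ - v₂‖ * ‖v₁ - v₂‖)) := by
            field_simp
      _ ≤ cA * ((‖v₁‖ + ‖v₂‖) ^ (2 - p) * (‖v₁‖ + ‖v₂‖) ^ (p - 2)) *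
            ((‖v₁‖ + ‖v₂‖) ^ (p - 2) * (‖v₁ - v₂‖ * ‖v₁ - v₂‖)) := by
            apply mul_le_mul_of_nonneg_right _ (by positivity)
            apply mul_le_mul_of_nonneg_left _ hcA.le
            exact mul_le_mul_of_nonneg_right hTlow hTp2.le
      _ = cA * ((‖v₁‖ + ‖v₂‖) ^ (p - 2) * (‖v₁ - v₂‖ * ‖v₁ - v₂‖)) := by
            rw [hTinv, mul_one]
      _ ≤ ⟪v₁ - v₂, w₁ - w₂⟫ := hmono
end

section
/- Let 1 < p < ∞ and let A : V → V be the map A(v) := |v|^{p−2} v (with A(0) := 0). Then there exist constants C, c > 0 depending only on p such that for all v₁, v₂ ∈ V: |A(v₁) − A(v₂)| ≤ C (|v₁| + |v₂|)^{p−2} |v₁ − v₂| and ⟨A(v₁) − A(v₂) | v₁ − v₂⟩ ≥ c (|v₁| + |v₂|)^{p−2} |v₁ − v₂|²; moreover A(λv) = λ^{p−1} A(v) for all λ ≥ 0. In other words, the p-power map satisfies the structural (homogeneity, Lipschitz and monotonicity) conditions of a p-structure. -/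
open scoped RealInnerProductSpace

section PStructureAux


section scalars

open Real

lemma bern_tangent {q a b : ℝ} (hq : 1 ≤ q) (ha : 0 < a) (hb : 0 ≤ b) :
    a ^ q + q * (a ^ (q - 1) * (b - a)) ≤ b ^ q := by
  have hx : (-1 : ℝ) ≤ b / a - 1 := by
    have : 0 ≤ b / a := div_nonneg hb ha.le
    linarith
  have h := one_add_mul_self_le_rpow_one_add hx hq
  have h2 : (1 : ℝ) + (b / a - 1) = b / a := by ring
  rw [h2, Real.div_rpow hb ha.le] at h
  have haq : 0 < a ^ q := Real.rpow_pos_of_pos ha q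
  have key := mul_le_mul_of_nonneg_right h haq.le
  have h3 : b ^ q / a ^ q * a ^ q = b ^ q := div_mul_cancel₀ _ haq.ne'
  rw [h3] at key
  have ha1 : a ^ (q - 1) = a ^ q / a := by rw [Real.rpow_sub ha, Real.rpow_one]
  calc a ^ q + q * (a ^ (q - 1) * (b - a))
      = (1 + q * (b / a - 1)) * a ^ q := by rw [ha1]; field_simp
    _ ≤ b ^ q := key

lemma bern_tangent' {q a b : ℝ} (hq0 : 0 < q) (hq : q ≤ 1) (ha : 0 < a) (hb : 0 ≤ b) :
    b ^ q ≤ a ^ q + q * (a ^ (q - 1) * (b - a)) := by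
  have hQ : 1 ≤ 1 / q := by rw [le_div_iff₀ hq0]; linarith
  have hA : 0 < a ^ q := Real.rpow_pos_of_pos ha q
  have hB : 0 ≤ b ^ q := Real.rpow_nonneg hb q
  have h := bern_tangent hQ hA hB
  have e1 : (a ^ q) ^ (1 / q : ℝ) = a := by
    rw [← Real.rpow_mul ha.le, mul_one_div_cancel hq0.ne', Real.rpow_one]
  have e2 : (b ^ q) ^ (1 / q : ℝ) = b := by
    rw [← Real.rpow_mul hb, mul_one_div_cancel hq0.ne', Real.rpow_one]
  have e3 : (a ^ q) ^ (1 / q - 1 : ℝ) = a ^ (1 - q) := by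
    rw [← Real.rpow_mul ha.le]
    congr 1
    field_simp
  rw [e1, e2, e3] at h
  -- h : a + 1/q * (a^(1-q) * (b^q - a^q)) ≤ b
  rw [one_div, inv_mul_eq_div] at h
  have h' : a ^ (1 - q) * (b ^ q - a ^ q) / q ≤ b - a := by linarith
  have h4 := (div_le_iff₀ hq0).mp h'
  have h5 := mul_le_mul_of_nonneg_left h4 (Real.rpow_pos_of_pos ha (q - 1)).le
  have e4 : a ^ (q - 1 : ℝ) * a ^ (1 - q : ℝ) = 1 := by
    rw [← Real.rpow_add ha]; norm_num
  have e5 : a ^ (q-1:ℝ) * (a ^ (1-q:ℝ) * (b ^ q - a ^ q)) = b ^ q - a ^ q := by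
    rw [← mul_assoc, e4, one_mul]
  nlinarith [h5, e5]

lemma rpow_succ {x : ℝ} (hx : 0 < x) (y : ℝ) : x ^ y * x = x ^ (y + 1) := by
  nth_rewrite 2 [← Real.rpow_one x]
  rw [← Real.rpow_add hx]

lemma lip_diff_ge2 {r s t : ℝ} (hr : 0 ≤ r) (ht : 0 ≤ t) (hts : t ≤ s) :
    (s ^ r - t ^ r) * t ≤ r * ((s + t) ^ r * (s - t)) := by
  have hs : 0 ≤ s := le_trans ht hts
  rcases hr.eq_or_lt with h0 | hr0
  · rw [← h0]; simp
  rcases ht.eq_or_lt with h0 | ht0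
  · rw [← h0]
    simp only [mul_zero]
    exact mul_nonneg hr (mul_nonneg (Real.rpow_nonneg (by linarith) r) (by linarith))
  have hs0 : 0 < s := lt_of_lt_of_le ht0 hts
  have hst : 0 < s + t := by linarith
  rcases le_or_gt 1 r with h1 | h1
  · have h := bern_tangent h1 hs0 ht
    have k1 : s ^ (r-1:ℝ) ≤ (s+t) ^ (r-1:ℝ) := Real.rpow_le_rpow hs0.le (by linarith) (by linarith)
    have k2 : (s+t) ^ (r-1:ℝ) * (s+t) = (s+t) ^ r := by
      rw [rpow_succ hst, show r - 1 + 1 = r from by ring]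
    have m1 : s ^ (r-1:ℝ) * t ≤ (s+t) ^ (r-1:ℝ) * (s+t) :=
      mul_le_mul k1 (by linarith) ht (Real.rpow_nonneg hst.le _)
    calc (s ^ r - t ^ r) * t ≤ (r * (s ^ (r-1:ℝ) * (s - t))) * t :=
          mul_le_mul_of_nonneg_right (by linarith) ht
      _ = r * (s - t) * (s ^ (r-1:ℝ) * t) := by ring
      _ ≤ r * (s - t) * ((s+t) ^ (r-1:ℝ) * (s+t)) :=
          mul_le_mul_of_nonneg_left m1 (mul_nonneg hr (by linarith))
      _ = r * ((s+t) ^ r * (s - t)) := by rw [k2]; ring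
  · have h := bern_tangent' hr0 h1.le ht0 hs0.le
    have k2 : t ^ (r-1:ℝ) * t = t ^ r := by
      rw [rpow_succ ht0, show r - 1 + 1 = r from by ring]
    have k3 : t ^ r ≤ (s+t) ^ r := Real.rpow_le_rpow ht (by linarith) hr
    calc (s ^ r - t ^ r) * t ≤ (r * (t ^ (r-1:ℝ) * (s - t))) * t :=
          mul_le_mul_of_nonneg_right (by linarith) ht
      _ = r * (s - t) * (t ^ (r-1:ℝ) * t) := by ring
      _ = r * (s - t) * t ^ r := by rw [k2]
      _ ≤ r * (s - t) * (s+t) ^ r := mul_le_mul_of_nonneg_left k3 (mul_nonneg hr (by linarith))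
      _ = r * ((s+t) ^ r * (s - t)) := by ring

lemma lip_diff_lt2 {p s t : ℝ} (hp : 1 < p) (hp2 : p < 2) (ht : 0 < t) (hts : t ≤ s) :
    (t ^ (p-2) - s ^ (p-2)) * t ≤ (2-p) * ((s - t) * s ^ (p-2)) := by
  have hs : 0 < s := lt_of_lt_of_le ht hts
  have h := bern_tangent' (q := 2-p) (by linarith) (by linarith) ht hs.le
  rw [show (2-p-1 : ℝ) = 1-p from by ring] at h
  have e1 : s ^ (p-2:ℝ) * s ^ (2-p:ℝ) = 1 := by
    rw [← Real.rpow_add hs]; norm_num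
  have e2 : t ^ (p-2:ℝ) * t ^ (2-p:ℝ) = 1 := by
    rw [← Real.rpow_add ht]; norm_num
  have e3 : t ^ (1-p:ℝ) * t = t ^ (2-p:ℝ) := by
    rw [rpow_succ ht, show (1-p) + 1 = 2-p from by ring]
  have hM : (0:ℝ) ≤ s ^ (p-2:ℝ) * t ^ (p-2:ℝ) * t := by positivity
  have key := mul_le_mul_of_nonneg_left h hM
  have E1 : s^(p-2:ℝ) * t^(p-2:ℝ) * t * (s^(2-p:ℝ)) = t^(p-2:ℝ) * t := by
    linear_combination (t^(p-2:ℝ) * t) * e1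
  have E2 : s^(p-2:ℝ) * t^(p-2:ℝ) * t * (t^(2-p:ℝ)) = s^(p-2:ℝ) * t := by
    linear_combination (s^(p-2:ℝ) * t) * e2
  have E3 : s^(p-2:ℝ) * t^(p-2:ℝ) * t * ((2-p) * (t^(1-p:ℝ) * (s-t)))
      = (2-p) * ((s-t) * s^(p-2:ℝ)) := by
    linear_combination ((2-p)*(s-t)*s^(p-2:ℝ)*t^(p-2:ℝ)) * e3 + ((2-p)*(s-t)*s^(p-2:ℝ)) * e2
  nlinarith [key, E1, E2, E3]

lemma mono_ge2 {p s t : ℝ} (hp : 2 ≤ p) (ht : 0 ≤ t) (hts : t ≤ s) (hs : 0 < s) :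
    (p-1) * 2 ^ (1-p:ℝ) * ((s+t) ^ (p-2) * (s-t)) ≤ s ^ (p-1) - t ^ (p-1) := by
  have hm : (0:ℝ) < (s+t)/2 := by linarith
  have h := bern_tangent (q := p-1) (by linarith) hm hs.le
  rw [show (p-1-1 : ℝ) = p-2 from by ring] at h
  have k1 : t ^ (p-1:ℝ) ≤ ((s+t)/2) ^ (p-1:ℝ) :=
    Real.rpow_le_rpow ht (by linarith) (by linarith)
  have e1 : ((s+t)/2) ^ (p-2:ℝ) = (s+t) ^ (p-2:ℝ) / 2 ^ (p-2:ℝ) :=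
    Real.div_rpow (by linarith) (by norm_num) _
  have e3 : (2:ℝ) ^ (1-p:ℝ) * 2 ^ (p-2:ℝ) = 1/2 := by
    rw [← Real.rpow_add two_pos, show (1-p) + (p-2) = (-1:ℝ) from by ring,
      Real.rpow_neg_one]
    norm_num
  have hT : (0:ℝ) < 2 ^ (p-2:ℝ) := Real.rpow_pos_of_pos two_pos _
  have key : (p-1) * 2 ^ (1-p:ℝ) * ((s+t) ^ (p-2:ℝ) * (s-t))
      = (p-1) * (((s+t)/2) ^ (p-2:ℝ) * (s - (s+t)/2)) := by
    rw [e1]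
    field_simp
    linear_combination ((p-1) * (s-t) * 2) * e3
  rw [key]
  linarith [h, k1]

lemma mono_lt2 {p s t : ℝ} (hp : 1 < p) (hp2 : p < 2) (ht : 0 ≤ t) (hts : t ≤ s) (hs : 0 < s) :
    (p-1) * ((s+t) ^ (p-2) * (s-t)) ≤ s ^ (p-1) - t ^ (p-1) := by
  have h := bern_tangent' (q := p-1) (by linarith) (by linarith) hs ht
  rw [show (p-1-1 : ℝ) = p-2 from by ring] at h
  have k1 : (s+t) ^ (p-2:ℝ) ≤ s ^ (p-2:ℝ) :=
    Real.rpow_le_rpow_of_nonpos hs (by linarith) (by linarith)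
  nlinarith [h, mul_le_mul_of_nonneg_left
    (mul_le_mul_of_nonneg_right k1 (by linarith : (0:ℝ) ≤ s - t))
    (by linarith : (0:ℝ) ≤ p-1)]

end scalars

variable {V : Type*} [NormedAddCommGroup V] [InnerProductSpace ℝ V]

lemma rp_two (x : ℝ) : x ^ (2:ℝ) = x ^ (2:ℕ) := by
  rw [show (2:ℝ) = ((2:ℕ):ℝ) from by norm_num, Real.rpow_natCast]

lemma lip_aux {p : ℝ} (hp : 1 < p) (v₁ v₂ : V) (h : ‖v₂‖ ≤ ‖v₁‖) :
    ‖‖v₁‖ ^ (p-2) • v₁ - ‖v₂‖ ^ (p-2) • v₂‖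
      ≤ (p+4) * ((‖v₁‖ + ‖v₂‖) ^ (p-2) * ‖v₁ - v₂‖) := by
  by_cases hv1 : v₁ = 0
  · have hv2 : v₂ = 0 := by
      rw [← norm_le_zero_iff]; rw [hv1, norm_zero] at h; exact h
    subst hv1; subst hv2; simp
  have hs : 0 < ‖v₁‖ := norm_pos_iff.mpr hv1
  have ht0 : 0 ≤ ‖v₂‖ := norm_nonneg v₂
  have hE : 0 ≤ (‖v₁‖ + ‖v₂‖) ^ (p-2:ℝ) := Real.rpow_nonneg (by linarith) _
  have hd : ‖v₁‖ - ‖v₂‖ ≤ ‖v₁ - v₂‖ :=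
    le_trans (le_abs_self _) (abs_norm_sub_norm_le v₁ v₂)
  have dec : ‖v₁‖ ^ (p-2:ℝ) • v₁ - ‖v₂‖ ^ (p-2:ℝ) • v₂
      = ‖v₁‖ ^ (p-2:ℝ) • (v₁ - v₂) + (‖v₁‖ ^ (p-2:ℝ) - ‖v₂‖ ^ (p-2:ℝ)) • v₂ := by
    module
  have bound : ‖‖v₁‖ ^ (p-2:ℝ) • v₁ - ‖v₂‖ ^ (p-2:ℝ) • v₂‖
      ≤ ‖v₁‖ ^ (p-2:ℝ) * ‖v₁ - v₂‖ + |‖v₁‖ ^ (p-2:ℝ) - ‖v₂‖ ^ (p-2:ℝ)| * ‖v₂‖ := by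
    rw [dec]
    refine (norm_add_le _ _).trans ?_
    rw [norm_smul, norm_smul, Real.norm_eq_abs, Real.norm_eq_abs,
      abs_of_nonneg (Real.rpow_nonneg (norm_nonneg v₁) _)]
  rcases le_or_gt 2 p with hge | hlt
  · have habs : |‖v₁‖ ^ (p-2:ℝ) - ‖v₂‖ ^ (p-2:ℝ)| = ‖v₁‖ ^ (p-2:ℝ) - ‖v₂‖ ^ (p-2:ℝ) :=
      abs_of_nonneg (sub_nonneg.2 (Real.rpow_le_rpow ht0 h (by linarith)))
    rw [habs] at bound
    have k1 : ‖v₁‖ ^ (p-2:ℝ) ≤ (‖v₁‖ + ‖v₂‖) ^ (p-2:ℝ) :=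
      Real.rpow_le_rpow hs.le (by linarith) (by linarith)
    have k2 := lip_diff_ge2 (r := p-2) (by linarith) ht0 h
    have h1 : ‖v₁‖ ^ (p-2:ℝ) * ‖v₁ - v₂‖ ≤ (‖v₁‖ + ‖v₂‖) ^ (p-2:ℝ) * ‖v₁ - v₂‖ :=
      mul_le_mul_of_nonneg_right k1 (norm_nonneg _)
    have hEd : (‖v₁‖ + ‖v₂‖) ^ (p-2:ℝ) * (‖v₁‖ - ‖v₂‖)
        ≤ (‖v₁‖ + ‖v₂‖) ^ (p-2:ℝ) * ‖v₁ - v₂‖ := mul_le_mul_of_nonneg_left hd hE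
    have h2' : (p-2) * ((‖v₁‖ + ‖v₂‖) ^ (p-2:ℝ) * (‖v₁‖ - ‖v₂‖))
        ≤ (p-2) * ((‖v₁‖ + ‖v₂‖) ^ (p-2:ℝ) * ‖v₁ - v₂‖) :=
      mul_le_mul_of_nonneg_left hEd (by linarith)
    have hpos : 0 ≤ (‖v₁‖ + ‖v₂‖) ^ (p-2:ℝ) * ‖v₁ - v₂‖ := mul_nonneg hE (norm_nonneg _)
    linarith [bound, h1, k2, h2', hpos]
  · by_cases hv2 : v₂ = 0
    · subst hv2
      simp only [norm_zero, smul_zero, sub_zero, add_zero]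
      rw [norm_smul, Real.norm_eq_abs, abs_of_nonneg (Real.rpow_nonneg (norm_nonneg v₁) _)]
      nlinarith [mul_nonneg (Real.rpow_nonneg (norm_nonneg v₁) (p-2)) (norm_nonneg v₁)]
    have ht : 0 < ‖v₂‖ := norm_pos_iff.mpr hv2
    have habs : |‖v₁‖ ^ (p-2:ℝ) - ‖v₂‖ ^ (p-2:ℝ)| = ‖v₂‖ ^ (p-2:ℝ) - ‖v₁‖ ^ (p-2:ℝ) := by
      rw [abs_of_nonpos (sub_nonpos.2 (Real.rpow_le_rpow_of_nonpos ht h (by linarith))),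
        neg_sub]
    rw [habs] at bound
    have e : (2:ℝ) ^ (2-p:ℝ) * 2 ^ (p-2:ℝ) = 1 := by
      rw [← Real.rpow_add two_pos, show (2-p) + (p-2) = (0:ℝ) from by ring, Real.rpow_zero]
    have k1 : ‖v₁‖ ^ (p-2:ℝ) ≤ 2 ^ (2-p:ℝ) * (‖v₁‖ + ‖v₂‖) ^ (p-2:ℝ) := by
      have hm : (0:ℝ) < (‖v₁‖ + ‖v₂‖)/2 := by linarith
      have h1 := Real.rpow_le_rpow_of_nonpos hm (by linarith : (‖v₁‖ + ‖v₂‖)/2 ≤ ‖v₁‖)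
        (by linarith : p - 2 ≤ 0)
      rw [Real.div_rpow (by linarith) (by norm_num)] at h1
      have hT : (0:ℝ) < 2 ^ (p-2:ℝ) := Real.rpow_pos_of_pos two_pos _
      rw [le_div_iff₀ hT] at h1
      have h1' := mul_le_mul_of_nonneg_left h1
        (le_of_lt (Real.rpow_pos_of_pos two_pos (2-p)))
      have ea : (2:ℝ)^(2-p:ℝ) * (‖v₁‖ ^ (p-2:ℝ) * 2 ^ (p-2:ℝ))
          = ‖v₁‖ ^ (p-2:ℝ) := by linear_combination (‖v₁‖ ^ (p-2:ℝ)) * e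
      linarith [h1']
    have k2 := lip_diff_lt2 hp hlt ht h
    have k3 : (‖v₁‖ - ‖v₂‖) * ‖v₁‖ ^ (p-2:ℝ)
        ≤ ‖v₁ - v₂‖ * (2 ^ (2-p:ℝ) * (‖v₁‖ + ‖v₂‖) ^ (p-2:ℝ)) :=
      mul_le_mul hd k1 (Real.rpow_nonneg (norm_nonneg v₁) _) (norm_nonneg _)
    have h2p : (2:ℝ) ^ (2-p:ℝ) ≤ 2 := by
      calc (2:ℝ) ^ (2-p:ℝ) ≤ (2:ℝ) ^ (1:ℝ) :=
            Real.rpow_le_rpow_of_exponent_le one_le_two (by linarith)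
        _ = 2 := Real.rpow_one 2
    have hnd : 0 ≤ ‖v₁ - v₂‖ := norm_nonneg _
    have hEnd : 0 ≤ (‖v₁‖ + ‖v₂‖) ^ (p-2:ℝ) * ‖v₁ - v₂‖ := mul_nonneg hE hnd
    have h1 : ‖v₁‖ ^ (p-2:ℝ) * ‖v₁ - v₂‖
        ≤ 2 ^ (2-p:ℝ) * (‖v₁‖ + ‖v₂‖) ^ (p-2:ℝ) * ‖v₁ - v₂‖ :=
      mul_le_mul_of_nonneg_right k1 hnd
    have k4 : (3-p) * ((‖v₁‖ + ‖v₂‖) ^ (p-2:ℝ) * ‖v₁ - v₂‖) * (2 ^ (2-p:ℝ))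
        ≤ (3-p) * ((‖v₁‖ + ‖v₂‖) ^ (p-2:ℝ) * ‖v₁ - v₂‖) * 2 :=
      mul_le_mul_of_nonneg_left h2p (mul_nonneg (by linarith) hEnd)
    have k5 : 0 ≤ (p-1) * ((‖v₁‖ + ‖v₂‖) ^ (p-2:ℝ) * ‖v₁ - v₂‖) :=
      mul_nonneg (by linarith) hEnd
    have k3' : (2-p) * ((‖v₁‖ - ‖v₂‖) * ‖v₁‖ ^ (p-2:ℝ))
        ≤ (2-p) * (‖v₁ - v₂‖ * (2 ^ (2-p:ℝ) * (‖v₁‖ + ‖v₂‖) ^ (p-2:ℝ))) :=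
      mul_le_mul_of_nonneg_left k3 (by linarith)
    linarith [bound, k2, k3', h1, k4, k5, hEnd]

set_option maxHeartbeats 1000000 in
lemma mono_aux {p : ℝ} (hp : 1 < p) (v₁ v₂ : V) (h : ‖v₂‖ ≤ ‖v₁‖) :
    (2 ^ (1-p:ℝ) * min 1 (p-1)) * ((‖v₁‖ + ‖v₂‖) ^ (p-2) * ‖v₁ - v₂‖ ^ (2:ℝ))
      ≤ ⟪‖v₁‖ ^ (p-2) • v₁ - ‖v₂‖ ^ (p-2) • v₂, v₁ - v₂⟫ := by
  have hG : (0:ℝ) < 2 ^ (1-p:ℝ) := Real.rpow_pos_of_pos two_pos _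
  have hG1 : (2:ℝ) ^ (1-p:ℝ) ≤ 1 := by
    calc (2:ℝ) ^ (1-p:ℝ) ≤ (2:ℝ) ^ (0:ℝ) :=
          Real.rpow_le_rpow_of_exponent_le one_le_two (by linarith)
      _ = 1 := Real.rpow_zero 2
  have hmin0 : 0 ≤ min 1 (p-1) := le_min (by norm_num) (by linarith)
  have hmin1 : min 1 (p-1) ≤ 1 := min_le_left _ _
  have hc1 : 2 ^ (1-p:ℝ) * min 1 (p-1) ≤ 1 := by
    have := mul_le_mul_of_nonneg_right hG1 hmin0
    linarith
  have hc0 : 0 ≤ 2 ^ (1-p:ℝ) * min 1 (p-1) := mul_nonneg hG.le hmin0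
  by_cases hv2 : v₂ = 0
  · subst hv2
    simp only [norm_zero, smul_zero, sub_zero, add_zero]
    rw [real_inner_smul_left, real_inner_self_eq_norm_sq, rp_two]
    have hX : 0 ≤ ‖v₁‖ ^ (p-2:ℝ) * ‖v₁‖ ^ (2:ℕ) :=
      mul_nonneg (Real.rpow_nonneg (norm_nonneg _) _) (by positivity)
    linarith [hX, mul_nonneg (sub_nonneg.2 hc1) hX]
  have ht : 0 < ‖v₂‖ := norm_pos_iff.mpr hv2
  have hs : 0 < ‖v₁‖ := lt_of_lt_of_le ht h
  have hE : 0 ≤ (‖v₁‖ + ‖v₂‖) ^ (p-2:ℝ) := Real.rpow_nonneg (by linarith) _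
  have e_s : ‖v₁‖ ^ (p-2:ℝ) * ‖v₁‖ = ‖v₁‖ ^ (p-1:ℝ) := by
    rw [rpow_succ hs, show p-2+1 = p-1 from by ring]
  have e_t : ‖v₂‖ ^ (p-2:ℝ) * ‖v₂‖ = ‖v₂‖ ^ (p-1:ℝ) := by
    rw [rpow_succ ht, show p-2+1 = p-1 from by ring]
  have expand : ⟪‖v₁‖ ^ (p-2:ℝ) • v₁ - ‖v₂‖ ^ (p-2:ℝ) • v₂, v₁ - v₂⟫
      = ‖v₁‖ ^ (p-2:ℝ) * ‖v₁‖^(2:ℕ) + ‖v₂‖ ^ (p-2:ℝ) * ‖v₂‖^(2:ℕ)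
        - (‖v₁‖ ^ (p-2:ℝ) + ‖v₂‖ ^ (p-2:ℝ)) * ⟪v₁, v₂⟫ := by
    rw [inner_sub_left, inner_sub_right, inner_sub_right, real_inner_smul_left,
      real_inner_smul_left, real_inner_smul_left, real_inner_smul_left,
      real_inner_self_eq_norm_sq, real_inner_self_eq_norm_sq, real_inner_comm v₂ v₁]
    ring
  have nd2 : ‖v₁ - v₂‖ ^ (2:ℝ) = ‖v₁‖^(2:ℕ) - 2 * ⟪v₁, v₂⟫ + ‖v₂‖^(2:ℕ) := by
    rw [rp_two, norm_sub_sq_real]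
  -- slope condition
  have h2 : 2 * (2 ^ (1-p:ℝ) * min 1 (p-1)) * (‖v₁‖ + ‖v₂‖) ^ (p-2:ℝ)
      ≤ ‖v₁‖ ^ (p-2:ℝ) + ‖v₂‖ ^ (p-2:ℝ) := by
    rcases le_or_gt 2 p with hge | hlt
    · rw [min_eq_left (by linarith)]
      have hEle : (‖v₁‖ + ‖v₂‖) ^ (p-2:ℝ) ≤ 2 ^ (p-2:ℝ) * ‖v₁‖ ^ (p-2:ℝ) := by
        have := Real.rpow_le_rpow (by linarith : (0:ℝ) ≤ ‖v₁‖ + ‖v₂‖)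
          (by linarith : ‖v₁‖ + ‖v₂‖ ≤ 2 * ‖v₁‖) (by linarith : 0 ≤ p-2)
        rwa [Real.mul_rpow (by norm_num) (norm_nonneg v₁)] at this
      have e3 : (2:ℝ) ^ (1-p:ℝ) * 2 ^ (p-2:ℝ) = 1/2 := by
        rw [← Real.rpow_add two_pos, show (1-p) + (p-2) = (-1:ℝ) from by ring,
          Real.rpow_neg_one]
        norm_num
      have key := mul_le_mul_of_nonneg_left hEle hG.le
      have e4 : (2:ℝ) ^ (1-p:ℝ) * (2 ^ (p-2:ℝ) * ‖v₁‖ ^ (p-2:ℝ)) = 1/2 * ‖v₁‖ ^ (p-2:ℝ) := by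
        linear_combination (‖v₁‖ ^ (p-2:ℝ)) * e3
      have hb : 0 ≤ ‖v₂‖ ^ (p-2:ℝ) := Real.rpow_nonneg ht.le _
      linarith [key, hb]
    · have hEa : (‖v₁‖ + ‖v₂‖) ^ (p-2:ℝ) ≤ ‖v₁‖ ^ (p-2:ℝ) :=
        Real.rpow_le_rpow_of_nonpos hs (by linarith) (by linarith)
      have hEb : (‖v₁‖ + ‖v₂‖) ^ (p-2:ℝ) ≤ ‖v₂‖ ^ (p-2:ℝ) :=
        Real.rpow_le_rpow_of_nonpos ht (by linarith) (by linarith)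
      linarith [hEa, hEb, mul_nonneg (sub_nonneg.2 hc1) hE]
  -- endpoint condition
  have h3 : (2 ^ (1-p:ℝ) * min 1 (p-1)) * ((‖v₁‖ + ‖v₂‖) ^ (p-2:ℝ) * (‖v₁‖ - ‖v₂‖)^(2:ℕ))
      ≤ (‖v₁‖ - ‖v₂‖) * (‖v₁‖ ^ (p-1:ℝ) - ‖v₂‖ ^ (p-1:ℝ)) := by
    have hst : 0 ≤ ‖v₁‖ - ‖v₂‖ := by linarith
    have hEs : 0 ≤ (‖v₁‖ + ‖v₂‖) ^ (p-2:ℝ) * (‖v₁‖ - ‖v₂‖) := mul_nonneg hE hst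
    rcases le_or_gt 2 p with hge | hlt
    · rw [min_eq_left (by linarith)]
      have hm := mono_ge2 hge ht.le h hs
      have step : 2 ^ (1-p:ℝ) * ((‖v₁‖ + ‖v₂‖) ^ (p-2:ℝ) * (‖v₁‖ - ‖v₂‖))
          ≤ ‖v₁‖ ^ (p-1:ℝ) - ‖v₂‖ ^ (p-1:ℝ) := by
        have hx : 0 ≤ (p-2) * (2 ^ (1-p:ℝ) * ((‖v₁‖ + ‖v₂‖) ^ (p-2:ℝ) * (‖v₁‖ - ‖v₂‖))) :=
          mul_nonneg (by linarith) (mul_nonneg hG.le hEs)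
        nlinarith [hm, hx]
      have := mul_le_mul_of_nonneg_right step hst
      nlinarith [this]
    · have hm := mono_lt2 hp hlt ht.le h hs
      have hcp : 2 ^ (1-p:ℝ) * min 1 (p-1) ≤ p - 1 := by
        rw [min_eq_right (by linarith)]
        have := mul_le_mul_of_nonneg_right hG1 (show (0:ℝ) ≤ p-1 from by linarith)
        linarith
      have step : (2 ^ (1-p:ℝ) * min 1 (p-1)) * ((‖v₁‖ + ‖v₂‖) ^ (p-2:ℝ) * (‖v₁‖ - ‖v₂‖))
          ≤ ‖v₁‖ ^ (p-1:ℝ) - ‖v₂‖ ^ (p-1:ℝ) := by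
        linarith [hm, mul_le_mul_of_nonneg_right hcp hEs]
      have := mul_le_mul_of_nonneg_right step hst
      nlinarith [this]
  have h4 : ⟪v₁, v₂⟫ ≤ ‖v₁‖ * ‖v₂‖ := real_inner_le_norm v₁ v₂
  have P : 0 ≤ (‖v₁‖ * ‖v₂‖ - ⟪v₁, v₂⟫)
      * ((‖v₁‖ ^ (p-2:ℝ) + ‖v₂‖ ^ (p-2:ℝ))
        - 2 * (2 ^ (1-p:ℝ) * min 1 (p-1)) * (‖v₁‖ + ‖v₂‖) ^ (p-2:ℝ)) :=
    mul_nonneg (by linarith) (by linarith)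
  have e_s2 : ‖v₁‖ ^ (p-2:ℝ) * ‖v₁‖^(2:ℕ) = ‖v₁‖ ^ (p-1:ℝ) * ‖v₁‖ := by
    linear_combination (‖v₁‖) * e_s
  have e_t2 : ‖v₂‖ ^ (p-2:ℝ) * ‖v₂‖^(2:ℕ) = ‖v₂‖ ^ (p-1:ℝ) * ‖v₂‖ := by
    linear_combination (‖v₂‖) * e_t
  have e_s3 : ‖v₁‖ ^ (p-2:ℝ) * ‖v₁‖ * ‖v₂‖ = ‖v₁‖ ^ (p-1:ℝ) * ‖v₂‖ := by
    linear_combination (‖v₂‖) * e_s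
  have e_t3 : ‖v₂‖ ^ (p-2:ℝ) * ‖v₂‖ * ‖v₁‖ = ‖v₂‖ ^ (p-1:ℝ) * ‖v₁‖ := by
    linear_combination (‖v₁‖) * e_t
  rw [expand, nd2]
  nlinarith [h3, P, e_s2, e_t2, e_s3, e_t3, h2, h4]


end PStructureAux

/-- For `1 < p < ∞`, the `p`-power map `A(v) := |v|^{p−2} v` (with
`A(0) = 0`, which is automatic with the rpow convention) satisfies the structural
(homogeneity, Lipschitz and monotonicity) conditions of a `p`-structure, with constants
depending only on `p`. -/
theorem power_map_is_p_structure
    {V : Type*} [NormedAddCommGroup V] [InnerProductSpace ℝ V] [FiniteDimensional ℝ V]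
    (p : ℝ) (hp : 1 < p) :
    ∃ C c : ℝ, 0 < C ∧ 0 < c ∧
      IsPStructureMap p (fun v : V => ‖v‖ ^ (p - 2) • v) C c := by
  refine ⟨p + 4, 2 ^ (1-p:ℝ) * min 1 (p-1), by linarith,
    mul_pos (Real.rpow_pos_of_pos two_pos _) (lt_min one_pos (by linarith)), ⟨?_, ?_, ?_⟩⟩
  · intro l hl v
    show ‖l • v‖ ^ (p-2) • (l • v) = l ^ (p - 1) • (‖v‖ ^ (p-2) • v)
    rw [norm_smul, Real.norm_eq_abs, abs_of_nonneg hl, Real.mul_rpow hl (norm_nonneg v),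
      smul_smul, smul_smul]
    congr 1
    have hll : l ^ (p-2:ℝ) * l = l ^ (p-1:ℝ) := by
      rcases hl.eq_or_lt with h0 | h0
      · rw [← h0, mul_zero, Real.zero_rpow (ne_of_gt (by linarith : (0:ℝ) < p - 1))]
      · rw [rpow_succ h0, show p-2+1 = p-1 from by ring]
    linear_combination (‖v‖ ^ (p-2:ℝ)) * hll
  · intro v₁ v₂
    show ‖‖v₁‖ ^ (p-2) • v₁ - ‖v₂‖ ^ (p-2) • v₂‖
        ≤ (p+4) * ((‖v₁‖ + ‖v₂‖) ^ (p - 2) * ‖v₁ - v₂‖)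
    rcases le_total ‖v₂‖ ‖v₁‖ with hle | hle
    · exact lip_aux hp v₁ v₂ hle
    · have h := lip_aux hp v₂ v₁ hle
      rw [norm_sub_rev, norm_sub_rev v₁ v₂, add_comm ‖v₁‖ ‖v₂‖]
      exact h
  · intro v₁ v₂
    show (2 ^ (1-p:ℝ) * min 1 (p-1)) * ((‖v₁‖ + ‖v₂‖) ^ (p - 2) * ‖v₁ - v₂‖ ^ (2:ℝ))
        ≤ ⟪‖v₁‖ ^ (p-2) • v₁ - ‖v₂‖ ^ (p-2) • v₂, v₁ - v₂⟫
    rcases le_total ‖v₂‖ ‖v₁‖ with hle | hle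
    · exact mono_aux hp v₁ v₂ hle
    · have h := mono_aux hp v₂ v₁ hle
      rw [add_comm ‖v₁‖ ‖v₂‖, norm_sub_rev v₁ v₂, ← inner_neg_neg (𝕜 := ℝ), neg_sub, neg_sub]
      exact h
end
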